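/- arXiv:1406.2188 — 7 statements merged into one kernel-verified Lean document; each statement's English description precedes it below -/
import Mathlib

section
/- Sorting in exponent vectors: let u = X_1^{α_1}···X_n^{α_n} and v = X_1^{β_1}···X_n^{β_n} be monomials of the same degree. Let J = {i : α_i + β_i is odd}, which has even cardinality 2t, with elements i_1 < i_2 < ... < i_{2t}. Then sort(u,v) = (X_1^{α'_1}···X_n^{α'_n}, X_1^{β'_1}···X_n^{β'_n}) where α'_i = β'_i = (α_i+β_i)/2 for i ∉ J, and α'_{i_r} = (α_{i_r}+β_{i_r}+(-1)^{r+1})/2, β'_{i_r} = (α_{i_r}+β_{i_r}+(-1)^r)/2 for 1 ≤ r ≤ 2t. -/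
/-- Monomials as multisets of variable indices (smaller index = larger variable). -/
def stdList (m : Multiset ℕ) : List ℕ := m.sort (· ≤ ·)

def evens (l : List ℕ) : List ℕ := ((l.zipIdx.map Prod.swap).filter fun p => p.1 % 2 == 0).map Prod.snd

def odds (l : List ℕ) : List ℕ := ((l.zipIdx.map Prod.swap).filter fun p => p.1 % 2 == 1).map Prod.snd

/-- `sort(u,v) = (Y_1Y_3⋯Y_{2p-1}, Y_2Y_4⋯Y_{2p})` where `uv = Y_1⋯Y_{2p}` is the
standard (weakly decreasing) factorization. -/
def sortPair (u v : Multiset ℕ) : Multiset ℕ × Multiset ℕ :=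
  (((evens (stdList (u + v)) : List ℕ) : Multiset ℕ),
   ((odds (stdList (u + v)) : List ℕ) : Multiset ℕ))

/-- The monomial `X_1^{α_1}⋯X_n^{α_n}` as a multiset of variable indices. -/
def toMul {n : ℕ} (α : Fin n → ℕ) : Multiset ℕ :=
  Finset.univ.val.bind fun i : Fin n => Multiset.replicate (α i) (i : ℕ)

namespace SortAux

def evF (k : ℕ) (l : List ℕ) : List ℕ := (((l.zipIdx k).map Prod.swap).filter fun p => p.1 % 2 == 0).map Prod.snd
def odF (k : ℕ) (l : List ℕ) : List ℕ := (((l.zipIdx k).map Prod.swap).filter fun p => p.1 % 2 == 1).map Prod.snd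

lemma evF_cons (k a : ℕ) (l : List ℕ) :
    evF k (a :: l) = (if k % 2 = 0 then [a] else []) ++ evF (k+1) l := by
  simp only [evF, List.zipIdx_cons, List.map_cons, List.filter]
  rcases Nat.mod_two_eq_zero_or_one k with h | h <;> simp [h]

lemma odF_cons (k a : ℕ) (l : List ℕ) :
    odF k (a :: l) = (if k % 2 = 1 then [a] else []) ++ odF (k+1) l := by
  simp only [odF, List.zipIdx_cons, List.map_cons, List.filter]
  rcases Nat.mod_two_eq_zero_or_one k with h | h <;> simp [h]

lemma evF_succ (l : List ℕ) : ∀ k, evF (k+1) l = odF k l := by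
  induction l with
  | nil => intro k; rfl
  | cons a l ih =>
    intro k
    rw [evF_cons, odF_cons, ih]
    have : (k+1) % 2 = 0 ↔ k % 2 = 1 := by omega
    rcases Nat.mod_two_eq_zero_or_one k with h | h <;> simp [h, this]

lemma odF_succ (l : List ℕ) : ∀ k, odF (k+1) l = evF k l := by
  induction l with
  | nil => intro k; rfl
  | cons a l ih =>
    intro k
    rw [odF_cons, evF_cons, ih]
    have : (k+1) % 2 = 1 ↔ k % 2 = 0 := by omega
    rcases Nat.mod_two_eq_zero_or_one k with h | h <;> simp [h, this]

lemma evens_eq (l : List ℕ) : evens l = evF 0 l := rfl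
lemma odds_eq (l : List ℕ) : odds l = odF 0 l := rfl

lemma evens_cons (a : ℕ) (l : List ℕ) : evens (a :: l) = a :: odds l := by
  rw [evens_eq, evF_cons, evF_succ, ← odds_eq]; simp

lemma odds_cons (a : ℕ) (l : List ℕ) : odds (a :: l) = evens l := by
  rw [odds_eq, odF_cons, odF_succ, ← evens_eq]; simp

lemma evens_nil : evens [] = [] := rfl
lemma odds_nil : odds [] = [] := rfl

lemma evens_append_odds_append (l₂ : List ℕ) : ∀ l₁ : List ℕ,
    (evens (l₁ ++ l₂) = evens l₁ ++ (if Even l₁.length then evens l₂ else odds l₂))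
    ∧ (odds (l₁ ++ l₂) = odds l₁ ++ (if Even l₁.length then odds l₂ else evens l₂)) := by
  intro l₁
  induction l₁ with
  | nil => simp [evens_nil, odds_nil]
  | cons a l ih =>
    constructor
    · rw [List.cons_append, evens_cons, ih.2, evens_cons]
      rcases Nat.even_or_odd l.length with h | h <;>
        simp [h, List.length_cons, Nat.even_add_one, Nat.not_even_iff_odd]
    · rw [List.cons_append, odds_cons, ih.1, odds_cons]
      rcases Nat.even_or_odd l.length with h | h <;>
        simp [h, List.length_cons, Nat.even_add_one, Nat.not_even_iff_odd]

lemma evens_replicate (a : ℕ) : ∀ c, evens (List.replicate c a) = List.replicate ((c+1)/2) a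
    ∧ odds (List.replicate c a) = List.replicate (c/2) a := by
  intro c
  induction c with
  | zero => simp [evens_nil, odds_nil]
  | succ c ih =>
    rw [List.replicate_succ, evens_cons, odds_cons, ih.1, ih.2]
    constructor
    · have : (c+1+1)/2 = c/2 + 1 := by omega
      rw [this, List.replicate_succ]
    · have : (c+1)/2 = (c+1)/2 := rfl
      rfl

end SortAux

namespace SortAux

lemma beq_even_add (b : Bool) (c T : ℕ) :
    (b == decide (Even (c + T))) = ((b == decide (Even c)) == decide (Even T)) := by
  rcases Nat.even_or_odd c with h1 | h1 <;> rcases Nat.even_or_odd T with h2 | h2 <;>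
    simp [Nat.even_add, h1, h2, Nat.not_even_iff_odd.2, Nat.not_even_iff_odd] <;>
    cases b <;> simp

def blocksL (g : ℕ → ℕ) : ℕ → ℕ → List ℕ
  | _, 0 => []
  | s, m+1 => List.replicate (g s) s ++ blocksL g (s+1) m

lemma main (g : ℕ → ℕ) : ∀ (m s : ℕ) (b : Bool),
    ((if b then evens (blocksL g s m) else odds (blocksL g s m) : List ℕ) : Multiset ℕ)
      = ((List.range' s m).map fun k => Multiset.replicate
          (if (b == decide (Even (∑ j ∈ Finset.Ico s k, g j))) then (g k + 1)/2 else g k / 2)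
          k).sum := by
  intro m
  induction m with
  | zero => intro s b; cases b <;> simp [blocksL, evens_nil, odds_nil]
  | succ m ih =>
    intro s b
    have hkey : ∀ k ∈ List.range' (s+1) m,
        Multiset.replicate
          (if (b == decide (Even (∑ j ∈ Finset.Ico s k, g j))) then (g k + 1)/2 else g k / 2) k
        = Multiset.replicate
          (if ((b == decide (Even (g s))) == decide (Even (∑ j ∈ Finset.Ico (s+1) k, g j)))
            then (g k + 1)/2 else g k / 2) k := by
      intro k hk
      have hks : s < k := by
        rw [List.mem_range'] at hk; omega
      rw [Finset.sum_eq_sum_Ico_succ_bot hks g, beq_even_add]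
    have hrw : List.range' s (m+1) = s :: List.range' (s+1) m := List.range'_succ
    rw [hrw, List.map_cons, List.sum_cons, List.map_congr_left hkey]
    have hhead : (b == decide (Even (∑ j ∈ Finset.Ico s s, g j))) = b := by
      simp
    rw [hhead]
    have hunf : blocksL g s (m+1) = List.replicate (g s) s ++ blocksL g (s+1) m := rfl
    rw [hunf]
    have hlen : (List.replicate (g s) s).length = g s := List.length_replicate
    rcases Nat.even_or_odd (g s) with hg | hg <;> cases b
    · -- Even g s, b = false
      rw [if_neg (by simp), (evens_append_odds_append _ _).2, hlen, if_pos hg,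
        (evens_replicate s (g s)).2, ← Multiset.coe_add]
      have := ih (s+1) false
      rw [if_neg (by simp)] at this
      rw [this]
      have htail : ∀ k ∈ List.range' (s+1) m,
          Multiset.replicate
            (if (false == decide (Even (∑ j ∈ Finset.Ico (s+1) k, g j)))
              then (g k + 1)/2 else g k / 2) k
          = Multiset.replicate
            (if ((false == decide (Even (g s))) == decide (Even (∑ j ∈ Finset.Ico (s+1) k, g j)))
              then (g k + 1)/2 else g k / 2) k := by
        intro k _
        congr 2
        simp [hg]
      rw [List.map_congr_left htail, Multiset.coe_replicate]
      simp
    · -- Even g s, b = true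
      rw [if_pos rfl, (evens_append_odds_append _ _).1, hlen, if_pos hg,
        (evens_replicate s (g s)).1, ← Multiset.coe_add]
      have := ih (s+1) true
      rw [if_pos rfl] at this
      rw [this]
      congr 1
      congr 1
      simp [hg]
    · -- Odd g s, b = false
      rw [if_neg (by simp), (evens_append_odds_append _ _).2, hlen,
        if_neg (Nat.not_even_iff_odd.2 hg), (evens_replicate s (g s)).2, ← Multiset.coe_add]
      have := ih (s+1) true
      rw [if_pos rfl] at this
      rw [this]
      have htail : ∀ k ∈ List.range' (s+1) m,
          Multiset.replicate
            (if (true == decide (Even (∑ j ∈ Finset.Ico (s+1) k, g j)))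
              then (g k + 1)/2 else g k / 2) k
          = Multiset.replicate
            (if ((false == decide (Even (g s))) == decide (Even (∑ j ∈ Finset.Ico (s+1) k, g j)))
              then (g k + 1)/2 else g k / 2) k := by
        intro k _
        congr 2
        simp [Nat.not_even_iff_odd.2 hg]
      rw [List.map_congr_left htail, Multiset.coe_replicate]
      simp
    · -- Odd g s, b = true
      rw [if_pos rfl, (evens_append_odds_append _ _).1, hlen,
        if_neg (Nat.not_even_iff_odd.2 hg), (evens_replicate s (g s)).1, ← Multiset.coe_add]
      have := ih (s+1) false
      rw [if_neg (by simp)] at this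
      rw [this]
      congr 1
      congr 1
      simp [Nat.not_even_iff_odd.2 hg]

end SortAux

namespace SortAux

lemma count_blocksL (g : ℕ → ℕ) : ∀ (m s x : ℕ),
    Multiset.count x ((blocksL g s m : List ℕ) : Multiset ℕ)
      = if s ≤ x ∧ x < s + m then g x else 0 := by
  intro m
  induction m with
  | zero => intro s x; simp [blocksL]
  | succ m ih =>
    intro s x
    have hunf : blocksL g s (m+1) = List.replicate (g s) s ++ blocksL g (s+1) m := rfl
    rw [hunf, ← Multiset.coe_add, Multiset.count_add, Multiset.coe_replicate,
      Multiset.count_replicate, ih]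
    rcases eq_or_ne s x with rfl | hx <;> split_ifs <;> omega

lemma count_sum_map (c : ℕ → ℕ) : ∀ (m s x : ℕ),
    Multiset.count x (((List.range' s m).map fun k => Multiset.replicate (c k) k).sum)
      = if s ≤ x ∧ x < s + m then c x else 0 := by
  intro m
  induction m with
  | zero => intro s x; simp
  | succ m ih =>
    intro s x
    rw [List.range'_succ, List.map_cons, List.sum_cons, Multiset.count_add,
      Multiset.count_replicate, ih]
    rcases eq_or_ne s x with rfl | hx <;> split_ifs <;> omega

lemma mem_blocksL (g : ℕ → ℕ) : ∀ (m s x : ℕ), x ∈ blocksL g s m → s ≤ x := by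
  intro m
  induction m with
  | zero => intro s x hx; simp [blocksL] at hx
  | succ m ih =>
    intro s x hx
    have hunf : blocksL g s (m+1) = List.replicate (g s) s ++ blocksL g (s+1) m := rfl
    rw [hunf, List.mem_append] at hx
    rcases hx with hx | hx
    · exact (List.eq_of_mem_replicate hx).ge
    · exact le_trans (Nat.le_succ s) (ih (s+1) x hx)

lemma sorted_blocksL (g : ℕ → ℕ) : ∀ (m s : ℕ), (blocksL g s m).Pairwise (· ≤ ·) := by
  intro m
  induction m with
  | zero => intro s; simp [blocksL]
  | succ m ih =>
    intro s
    have hunf : blocksL g s (m+1) = List.replicate (g s) s ++ blocksL g (s+1) m := rfl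
    rw [hunf]
    refine List.pairwise_append.2 ⟨List.pairwise_replicate.2 (Or.inr le_rfl), ih (s+1), ?_⟩
    intro a ha b hb
    rw [List.eq_of_mem_replicate ha]
    exact le_trans (Nat.le_succ s) (mem_blocksL g m (s+1) b hb)

lemma count_toMul {n : ℕ} (γ : Fin n → ℕ) (x : ℕ) :
    Multiset.count x (toMul γ) = if h : x < n then γ ⟨x, h⟩ else 0 := by
  rw [toMul, Multiset.count_bind]
  simp only [Multiset.count_replicate]
  have : (Multiset.map (fun i : Fin n => if (i : ℕ) = x then γ i else 0) Finset.univ.val).sum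
      = ∑ i : Fin n, if (i : ℕ) = x then γ i else 0 := rfl
  rw [this]
  split
  · next h =>
    rw [Finset.sum_eq_single ⟨x, h⟩]
    · simp
    · intro i _ hi
      rw [if_neg]
      exact fun hc => hi (Fin.ext hc)
    · simp
  · next h =>
    apply Finset.sum_eq_zero
    intro i _
    rw [if_neg]
    exact fun hc => h (hc ▸ i.isLt)

end SortAux

namespace SortAux

def ext {n : ℕ} (γ : Fin n → ℕ) : ℕ → ℕ := fun k => if h : k < n then γ ⟨k, h⟩ else 0

lemma ext_val {n : ℕ} (γ : Fin n → ℕ) (i : Fin n) : ext γ ↑i = γ i := dif_pos i.isLt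

lemma coe_blocks_toMul {n : ℕ} (γ : Fin n → ℕ) :
    ((blocksL (ext γ) 0 n : List ℕ) : Multiset ℕ) = toMul γ := by
  rw [Multiset.ext]
  intro x
  rw [count_blocksL, count_toMul]
  by_cases h : x < n
  · rw [if_pos ⟨Nat.zero_le x, by omega⟩, dif_pos h]
    exact dif_pos h
  · rw [if_neg (by omega), dif_neg h]

lemma stdList_eq {n : ℕ} (γ : Fin n → ℕ) : stdList (toMul γ) = blocksL (ext γ) 0 n := by
  rw [stdList, ← coe_blocks_toMul]
  exact List.Perm.eq_of_pairwise' (Multiset.pairwise_sort _ _) (sorted_blocksL _ n 0)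
    (Multiset.coe_eq_coe.1 (Multiset.sort_eq _ _))

lemma toMul_add {n : ℕ} (α β : Fin n → ℕ) :
    toMul (fun i => α i + β i) = toMul α + toMul β := by
  rw [Multiset.ext]
  intro x
  rw [Multiset.count_add, count_toMul, count_toMul, count_toMul]
  by_cases h : x < n
  · simp [h]
  · simp [h]

lemma card_lt_eq {n : ℕ} (γ : Fin n → ℕ) (i : Fin n) :
    ((Finset.range (i : ℕ)).filter fun j => Odd (ext γ j)).card
      = (Finset.univ.filter fun j : Fin n => Odd (γ j) ∧ j < i).card := by
  rw [Finset.card_filter, Finset.card_filter]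
  have h1 : (∑ j ∈ Finset.range (i : ℕ), if Odd (ext γ j) then 1 else 0)
      = ∑ j ∈ Finset.range n, if j < (i : ℕ) ∧ Odd (ext γ j) then 1 else 0 := by
    rw [Finset.sum_congr rfl (g := fun j => if j < (i : ℕ) ∧ Odd (ext γ j) then 1 else 0)
      (fun j hj => by rw [Finset.mem_range] at hj; simp [hj])]
    refine Finset.sum_subset (Finset.range_subset_range.2 i.isLt.le) ?_
    intro j _ hj
    rw [Finset.mem_range] at hj
    rw [if_neg (by omega)]
  rw [h1, ← Fin.sum_univ_eq_sum_range (fun j => if j < (i : ℕ) ∧ Odd (ext γ j) then 1 else 0) n]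
  refine Finset.sum_congr rfl fun j _ => ?_
  rw [ext_val]
  congr 1
  simp only [eq_iff_iff]
  rw [Fin.lt_def]
  tauto

lemma card_le_split {n : ℕ} (γ : Fin n → ℕ) (i : Fin n) (hodd : Odd (γ i)) :
    (Finset.univ.filter fun j : Fin n => Odd (γ j) ∧ j ≤ i).card
      = (Finset.univ.filter fun j : Fin n => Odd (γ j) ∧ j < i).card + 1 := by
  have hset : (Finset.univ.filter fun j : Fin n => Odd (γ j) ∧ j ≤ i)
      = (Finset.univ.filter fun j : Fin n => Odd (γ j) ∧ j < i) ∪ {i} := by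
    ext j
    simp only [Finset.mem_filter, Finset.mem_union, Finset.mem_singleton, Finset.mem_univ,
      true_and]
    constructor
    · rintro ⟨h1, h2⟩
      rcases lt_or_eq_of_le h2 with h | h
      · exact Or.inl ⟨h1, h⟩
      · exact Or.inr h
    · rintro (⟨h1, h2⟩ | rfl)
      · exact ⟨h1, h2.le⟩
      · exact ⟨hodd, le_rfl⟩
  rw [hset, Finset.card_union_of_disjoint, Finset.card_singleton]
  rw [Finset.disjoint_singleton_right]
  simp

lemma parity_key {n : ℕ} (γ : Fin n → ℕ) (i : Fin n) :
    Even (∑ j ∈ Finset.range (i : ℕ), ext γ j)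
      ↔ Even ((Finset.univ.filter fun j : Fin n => Odd (γ j) ∧ j < i).card) := by
  rw [Finset.even_sum_iff_even_card_odd, card_lt_eq]

end SortAux


/-- sorting in exponent vectors.  Let `J = {i : α_i + β_i odd}` and,
for `i ∈ J`, let `r` be the (1-based) position of `i` in `J`, i.e.
`r = #{j ∈ J : j ≤ i}`.  Then `sort(X^α, X^β) = (X^{α'}, X^{β'})` with
`α'_i = β'_i = (α_i+β_i)/2` for `i ∉ J`, and
`α'_i = (α_i+β_i+(-1)^{r+1})/2`, `β'_i = (α_i+β_i+(-1)^r)/2` for `i ∈ J`. -/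
theorem sortPair_exponents {n : ℕ} (α β : Fin n → ℕ) (h : ∑ i, α i = ∑ i, β i) :
    sortPair (toMul α) (toMul β) =
      (toMul (fun i => if Even (α i + β i) then (α i + β i) / 2
          else if Odd ((Finset.univ.filter fun j => Odd (α j + β j) ∧ j ≤ i).card)
            then (α i + β i + 1) / 2 else (α i + β i - 1) / 2),
       toMul (fun i => if Even (α i + β i) then (α i + β i) / 2
          else if Odd ((Finset.univ.filter fun j => Odd (α j + β j) ∧ j ≤ i).card)
            then (α i + β i - 1) / 2 else (α i + β i + 1) / 2)) := by
  classical
  have hstd : stdList (toMul α + toMul β)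
      = SortAux.blocksL (SortAux.ext fun i => α i + β i) 0 n := by
    rw [← SortAux.toMul_add, SortAux.stdList_eq]
  rw [sortPair, hstd, Prod.mk.injEq]
  constructor
  · have h1 := SortAux.main (SortAux.ext fun i => α i + β i) n 0 true
    rw [if_pos rfl] at h1
    rw [h1, Multiset.ext]
    intro x
    rw [SortAux.count_sum_map, SortAux.count_toMul]
    by_cases hx : x < n
    · rw [if_pos ⟨Nat.zero_le x, by omega⟩, dif_pos hx]
      set i : Fin n := ⟨x, hx⟩ with hi
      have hext : SortAux.ext (fun i => α i + β i) x = α i + β i :=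
        SortAux.ext_val (fun i => α i + β i) i
      rw [← Finset.range_eq_Ico, hext]
      have hpar := SortAux.parity_key (fun i => α i + β i) i
      rcases Nat.even_or_odd (α i + β i) with he | ho
      · rw [if_pos he]
        obtain ⟨c, hc⟩ := he
        split_ifs <;> omega
      · rw [if_neg (Nat.not_even_iff_odd.2 ho)]
        have hcard := SortAux.card_le_split (fun i => α i + β i) i ho
        obtain ⟨c, hc⟩ := ho
        by_cases hS : Even (∑ j ∈ Finset.range x, SortAux.ext (fun i => α i + β i) j)
        · have h2 : Even ((Finset.univ.filter fun j : Fin n => Odd (α j + β j) ∧ j < i).card) :=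
            hpar.1 hS
          have h3 : Odd ((Finset.univ.filter fun j : Fin n => Odd (α j + β j) ∧ j ≤ i).card) := by
            rw [hcard]; exact Even.add_one h2
          rw [if_pos h3, if_pos (by simpa using hS)]
        · have h2 : ¬ Even ((Finset.univ.filter fun j : Fin n => Odd (α j + β j) ∧ j < i).card) :=
            fun hc => hS (hpar.2 hc)
          have h3 : ¬ Odd ((Finset.univ.filter fun j : Fin n => Odd (α j + β j) ∧ j ≤ i).card) := by
            rw [hcard, Nat.odd_add_one]
            exact fun hc => h2 (Nat.not_odd_iff_even.1 hc)
          rw [if_neg h3, if_neg (by simpa using hS)]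
          omega
    · rw [if_neg (by omega), dif_neg hx]
  · have h1 := SortAux.main (SortAux.ext fun i => α i + β i) n 0 false
    rw [if_neg (by simp)] at h1
    rw [h1, Multiset.ext]
    intro x
    rw [SortAux.count_sum_map, SortAux.count_toMul]
    by_cases hx : x < n
    · rw [if_pos ⟨Nat.zero_le x, by omega⟩, dif_pos hx]
      set i : Fin n := ⟨x, hx⟩ with hi
      have hext : SortAux.ext (fun i => α i + β i) x = α i + β i :=
        SortAux.ext_val (fun i => α i + β i) i
      rw [← Finset.range_eq_Ico, hext]
      have hpar := SortAux.parity_key (fun i => α i + β i) i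
      rcases Nat.even_or_odd (α i + β i) with he | ho
      · rw [if_pos he]
        obtain ⟨c, hc⟩ := he
        split_ifs <;> omega
      · rw [if_neg (Nat.not_even_iff_odd.2 ho)]
        have hcard := SortAux.card_le_split (fun i => α i + β i) i ho
        obtain ⟨c, hc⟩ := ho
        by_cases hS : Even (∑ j ∈ Finset.range x, SortAux.ext (fun i => α i + β i) j)
        · have h2 : Even ((Finset.univ.filter fun j : Fin n => Odd (α j + β j) ∧ j < i).card) :=
            hpar.1 hS
          have h3 : Odd ((Finset.univ.filter fun j : Fin n => Odd (α j + β j) ∧ j ≤ i).card) := by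
            rw [hcard]; exact Even.add_one h2
          rw [if_pos h3, if_neg (by simpa using hS)]
          omega
        · have h2 : ¬ Even ((Finset.univ.filter fun j : Fin n => Odd (α j + β j) ∧ j < i).card) :=
            fun hc => hS (hpar.2 hc)
          have h3 : ¬ Odd ((Finset.univ.filter fun j : Fin n => Odd (α j + β j) ∧ j ≤ i).card) := by
            rw [hcard, Nat.odd_add_one]
            exact fun hc => h2 (Nat.not_odd_iff_even.1 hc)
          rw [if_neg h3, if_pos (by simpa using hS)]
    · rw [if_neg (by omega), dif_neg hx]
end

section
/- Partial sums under sorting: let u = X^α and v = X^β be monomials of the same degree with sort(u,v) = (X^{α'}, X^{β'}), and let i_1 < ... < i_{2t} enumerate {i : α_i+β_i odd}. Then for each index i: if i > i_{2t}, i ≤ i_1, or i_{2r} < i ≤ i_{2r+1} for some r, then Σ_{k≥i} α'_k = Σ_{k≥i} β'_k = Σ_{k≥i} (α_k+β_k)/2; and if i_{2r-1} < i ≤ i_{2r} for some r, then Σ_{k≥i} α'_k = -1/2 + Σ_{k≥i} (α_k+β_k)/2 and Σ_{k≥i} β'_k = 1/2 + Σ_{k≥i} (α_k+β_k)/2. 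-/
lemma enumFrom_succ_eq (n : ℕ) (l : List ℕ) :
    l.zipIdx (n + 1) = (l.zipIdx n).map (fun p => (p.1, p.2 + 1)) := by
  induction l generalizing n with
  | nil => simp
  | cons a l ih => simp [List.zipIdx_cons, ih]

lemma evens_cons (a : ℕ) (l : List ℕ) : evens (a :: l) = a :: odds l := by
  simp only [evens, odds]
  rw [show (a :: l).zipIdx = (a, 0) :: l.zipIdx (0 + 1) from rfl,
    enumFrom_succ_eq, List.map_cons, List.map_map, List.filter_cons, List.filter_map]
  have : ∀ x ∈ l.zipIdx 0, ((fun p : ℕ × ℕ => p.1 % 2 == 0) ∘ Prod.swap ∘ (fun p : ℕ × ℕ => (p.1, p.2 + 1))) x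
      = ((fun p : ℕ × ℕ => p.1 % 2 == 1) ∘ Prod.swap) x := by
    intro x _; simp [Function.comp]; omega
  rw [List.filter_congr this, List.filter_map]
  simp [List.map_map, Function.comp_def]

lemma odds_cons (a : ℕ) (l : List ℕ) : odds (a :: l) = evens l := by
  simp only [evens, odds]
  rw [show (a :: l).zipIdx = (a, 0) :: l.zipIdx (0 + 1) from rfl,
    enumFrom_succ_eq, List.map_cons, List.map_map, List.filter_cons, List.filter_map]
  have : ∀ x ∈ l.zipIdx 0, ((fun p : ℕ × ℕ => p.1 % 2 == 1) ∘ Prod.swap ∘ (fun p : ℕ × ℕ => (p.1, p.2 + 1))) x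
      = ((fun p : ℕ × ℕ => p.1 % 2 == 0) ∘ Prod.swap) x := by
    intro x _; simp [Function.comp]; omega
  rw [List.filter_congr this, List.filter_map]
  simp [List.map_map, Function.comp_def]

/-- The key counting lemma: in a sorted list of even length, the elements `≥ c` occupy a
suffix, so the even positions catch `⌊m/2⌋` of them and the odd positions `⌈m/2⌉`. -/
lemma counts (c : ℕ) : ∀ (L : List ℕ), L.Pairwise (· ≤ ·) → Even L.length →
    ((evens L).filter (fun x => c ≤ x)).length = (L.filter (fun x => c ≤ x)).length / 2 ∧
    ((odds L).filter (fun x => c ≤ x)).length =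
      (L.filter (fun x => c ≤ x)).length - (L.filter (fun x => c ≤ x)).length / 2
  | [] => by intro _ _; simp [evens, odds]
  | [a] => by intro _ hev; simp at hev
  | a :: b :: L => by
    intro hs hev
    obtain ⟨ha, hs'⟩ := List.pairwise_cons.mp hs
    obtain ⟨hb, hs''⟩ := List.pairwise_cons.mp hs'
    have hev' : Even L.length := by
      simp only [List.length_cons] at hev
      rcases hev with ⟨t, ht⟩; exact ⟨t - 1, by omega⟩
    obtain ⟨he, ho⟩ := counts c L hs'' hev'
    simp only [evens_cons, odds_cons]
    by_cases hca : c ≤ a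
    · have hcb : c ≤ b := le_trans hca (ha b List.mem_cons_self)
      simp only [List.filter_cons, hca, hcb, decide_true, if_true, List.length_cons]
      constructor <;> omega
    · by_cases hcb : c ≤ b
      · have hall : ∀ x ∈ L, c ≤ x := fun x hx => le_trans hcb (hb x hx)
        have hm' : (L.filter (fun x => c ≤ x)).length = L.length := by
          rw [List.filter_eq_self.mpr]
          intro x hx; simpa using hall x hx
        have hm'2 : (L.filter (fun x => c ≤ x)).length % 2 = 0 := by
          rw [hm']; exact Nat.even_iff.mp hev'
        simp [List.filter_cons, hca, hcb]
        constructor <;> omega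
      · simp [List.filter_cons, hca, hcb]
        exact ⟨he, ho⟩

lemma countP_bind {β : Type*} (s : Multiset β) (f : β → Multiset ℕ) (p : ℕ → Prop)
    [DecidablePred p] :
    Multiset.countP p (s.bind f) = (s.map fun b => Multiset.countP p (f b)).sum := by
  induction s using Multiset.induction with
  | empty => simp
  | cons a s ih => simp [Multiset.cons_bind, ih]

lemma countP_replicate (p : ℕ → Prop) [DecidablePred p] (m a : ℕ) :
    Multiset.countP p (Multiset.replicate m a) = if p a then m else 0 := by
  induction m with
  | zero => simp
  | succ m ih => rw [Multiset.replicate_succ, Multiset.countP_cons, ih]; split_ifs <;> omega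

lemma card_toMul {n : ℕ} (γ : Fin n → ℕ) : (toMul γ).card = ∑ k, γ k := by
  simp [toMul, Multiset.card_bind, Function.comp_def]
  rw [List.sum_ofFn]

lemma card_filter_toMul {n : ℕ} (γ : Fin n → ℕ) (i : Fin n) :
    (Multiset.filter (fun x => (i : ℕ) ≤ x) (toMul γ)).card
      = ∑ k ∈ Finset.univ.filter (fun k => i ≤ k), γ k := by
  rw [Finset.sum_filter, ← Multiset.countP_eq_card_filter]
  unfold toMul
  rw [countP_bind]
  show ∑ k, Multiset.countP (fun x => (i : ℕ) ≤ x) (Multiset.replicate (γ k) (k : ℕ)) = _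
  refine Finset.sum_congr rfl fun k _ => ?_
  rw [countP_replicate]
  by_cases hik : i ≤ k
  · rw [if_pos (by exact_mod_cast hik), if_pos hik]
  · rw [if_neg (by exact_mod_cast hik), if_neg hik]

/-- partial sums under sorting.  Let `sort(X^α, X^β) = (X^{α'}, X^{β'})`
and `i_1 < ⋯ < i_{2t}` enumerate `J = {i : α_i + β_i odd}`.  For an index `i`, the
condition "`i > i_{2t}`, `i ≤ i_1`, or `i_{2r} < i ≤ i_{2r+1}`" is exactly that the
tail count `#{j ∈ J : j ≥ i}` is even, and in that case
`Σ_{k≥i} α'_k = Σ_{k≥i} β'_k = Σ_{k≥i}(α_k+β_k)/2`; the condition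
"`i_{2r-1} < i ≤ i_{2r}`" is exactly that the tail count is odd, and in that case
`Σ_{k≥i} α'_k = -1/2 + Σ_{k≥i}(α_k+β_k)/2` and `Σ_{k≥i} β'_k = 1/2 + Σ_{k≥i}(α_k+β_k)/2`
(stated integrally by doubling). -/
theorem sortPair_partial_sums {n : ℕ} (α β α' β' : Fin n → ℕ)
    (h : ∑ i, α i = ∑ i, β i)
    (hsort : sortPair (toMul α) (toMul β) = (toMul α', toMul β')) (i : Fin n) :
    (Even ((Finset.univ.filter fun j => Odd (α j + β j) ∧ i ≤ j).card) →
      (∑ k ∈ Finset.univ.filter (fun k => i ≤ k), α' k) =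
        (∑ k ∈ Finset.univ.filter (fun k => i ≤ k), β' k) ∧
      2 * (∑ k ∈ Finset.univ.filter (fun k => i ≤ k), α' k) =
        (∑ k ∈ Finset.univ.filter (fun k => i ≤ k), (α k + β k))) ∧
    (Odd ((Finset.univ.filter fun j => Odd (α j + β j) ∧ i ≤ j).card) →
      2 * (∑ k ∈ Finset.univ.filter (fun k => i ≤ k), α' k) + 1 =
        (∑ k ∈ Finset.univ.filter (fun k => i ≤ k), (α k + β k)) ∧
      2 * (∑ k ∈ Finset.univ.filter (fun k => i ≤ k), β' k) =
        (∑ k ∈ Finset.univ.filter (fun k => i ≤ k), (α k + β k)) + 1) := by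
  classical
  set c : ℕ := (i : ℕ) with hc
  set L : List ℕ := stdList (toMul α + toMul β) with hL
  have hsorted : L.Pairwise (· ≤ ·) := Multiset.pairwise_sort _ _
  have hcoe : (L : Multiset ℕ) = toMul α + toMul β := Multiset.sort_eq _ _
  have hlenL : L.length = ∑ k, α k + ∑ k, β k := by
    have h1 : L.length = Multiset.card ((L : Multiset ℕ)) := rfl
    rw [h1, hcoe, Multiset.card_add, card_toMul, card_toMul]
  have hevenlen : Even L.length := by
    rw [hlenL, ← h]; exact ⟨∑ k, α k, rfl⟩
  rw [sortPair, Prod.mk.injEq] at hsort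
  obtain ⟨hA, hB⟩ := hsort
  -- the total tail count
  have hm : (L.filter (fun x => c ≤ x)).length
      = ∑ k ∈ Finset.univ.filter (fun k => i ≤ k), (α k + β k) := by
    have h1 : ((L.filter (fun x => c ≤ x) : List ℕ) : Multiset ℕ)
        = Multiset.filter (fun x => c ≤ x) (toMul α + toMul β) := by
      rw [← hcoe]; simp
    have h2 : (L.filter (fun x => c ≤ x)).length
        = (Multiset.filter (fun x => c ≤ x) (toMul α + toMul β)).card := by
      rw [← h1]; rfl
    rw [h2, Multiset.filter_add, Multiset.card_add, card_filter_toMul, card_filter_toMul,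
      ← Finset.sum_add_distrib]
  -- the tail sums of α' and β'
  have hSa : ∑ k ∈ Finset.univ.filter (fun k => i ≤ k), α' k
      = ((evens L).filter (fun x => c ≤ x)).length := by
    rw [← card_filter_toMul α' i, ← hA]
    simp
    rfl
  have hSb : ∑ k ∈ Finset.univ.filter (fun k => i ≤ k), β' k
      = ((odds L).filter (fun x => c ≤ x)).length := by
    rw [← card_filter_toMul β' i, ← hB]
    simp
    rfl
  obtain ⟨he, ho⟩ := counts c L hsorted hevenlen
  -- parity bridge
  have hpar : Even ((Finset.univ.filter fun j => Odd (α j + β j) ∧ i ≤ j).card)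
      ↔ Even ((L.filter (fun x => c ≤ x)).length) := by
    rw [hm, Finset.even_sum_iff_even_card_odd, Finset.filter_filter]
    have heq : Finset.filter (fun a => i ≤ a ∧ Odd (α a + β a)) Finset.univ
        = Finset.filter (fun j => Odd (α j + β j) ∧ i ≤ j) Finset.univ :=
      Finset.filter_congr (fun x _ => by tauto)
    rw [heq]
  rcases Nat.even_or_odd ((L.filter (fun x => c ≤ x)).length) with hev | hod
  · have hmod : (L.filter (fun x => c ≤ x)).length % 2 = 0 := Nat.even_iff.mp hev
    constructor
    · intro _
      constructor <;> omega
    · intro hoddcard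
      exact absurd (hpar.mpr hev) (Nat.not_even_iff_odd.mpr hoddcard)
  · have hmod : (L.filter (fun x => c ≤ x)).length % 2 = 1 := Nat.odd_iff.mp hod
    constructor
    · intro hevencard
      exact absurd (hpar.mp hevencard) (Nat.not_even_iff_odd.mpr hod)
    · intro _
      constructor <;> omega
end

section
/- (De Negri's characterization of principal strongly stable sets) Let w_1 = X_1^{α_1}···X_n^{α_n} and w_2 = X_1^{β_1}···X_n^{β_n} be monomials of the same degree. Then w_2 ∈ B(w_1) if and only if Σ_{i=k}^n β_i ≤ Σ_{i=k}^n α_i for all 2 ≤ k ≤ n. -/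
open Finset

/-- Membership in the principal strongly stable set `B(w)` (exponent-vector form):
`B(w)` is the smallest set of monomials containing `w` and closed under replacing
a variable `X_j` dividing the monomial by a variable `X_i` with `i < j`. -/
inductive memBv {n : ℕ} (w : Fin n → ℕ) : (Fin n → ℕ) → Prop
  | base : memBv w w
  | step (v : Fin n → ℕ) (i j : Fin n) (hij : i < j) (hj : 0 < v j) (hv : memBv w v) :
      memBv w (Function.update (Function.update v j (v j - 1)) i (v i + 1))

lemma memBv_trans {n : ℕ} {a b c : Fin n → ℕ} (h1 : memBv a b) (h2 : memBv b c) :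
    memBv a c := by
  induction h2 with
  | base => exact h1
  | step v i j hij hj hv ih => exact memBv.step v i j hij hj ih

lemma sum_move_mem {n : ℕ} (v : Fin n → ℕ) (i j : Fin n) (hij : i ≠ j) (hj : 0 < v j)
    (s : Finset (Fin n)) (hi : i ∈ s) (hjs : j ∈ s) :
    ∑ m ∈ s, (Function.update (Function.update v j (v j - 1)) i (v i + 1)) m
      = ∑ m ∈ s, v m := by
  have hj' : j ∈ s \ {i} := Finset.mem_sdiff.2 ⟨hjs, by simp [Ne.symm hij]⟩
  rw [Finset.sum_update_of_mem hi, Finset.sum_update_of_mem hj',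
    Finset.sdiff_singleton_eq_erase, Finset.sdiff_singleton_eq_erase,
    ← Finset.add_sum_erase s v hi,
    ← Finset.add_sum_erase (s.erase i) v (Finset.mem_erase.2 ⟨Ne.symm hij, hjs⟩)]
  omega

lemma sum_move_notmem {n : ℕ} (v : Fin n → ℕ) (i j : Fin n) (hj : 0 < v j)
    (s : Finset (Fin n)) (hi : i ∉ s) (hjs : j ∈ s) :
    (∑ m ∈ s, (Function.update (Function.update v j (v j - 1)) i (v i + 1)) m) + 1
      = ∑ m ∈ s, v m := by
  have h1 : ∑ m ∈ s, (Function.update (Function.update v j (v j - 1)) i (v i + 1)) m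
      = ∑ m ∈ s, (Function.update v j (v j - 1)) m :=
    Finset.sum_congr rfl fun m hm =>
      Function.update_of_ne (show m ≠ i from fun e => hi (e ▸ hm)) _ _
  rw [h1, Finset.sum_update_of_mem hjs, Finset.sdiff_singleton_eq_erase,
    ← Finset.add_sum_erase s v hjs]
  omega

lemma sum_move_nn {n : ℕ} (v : Fin n → ℕ) (i j : Fin n)
    (s : Finset (Fin n)) (hi : i ∉ s) (hjs : j ∉ s) :
    ∑ m ∈ s, (Function.update (Function.update v j (v j - 1)) i (v i + 1)) m
      = ∑ m ∈ s, v m :=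
  Finset.sum_congr rfl fun m hm => by
    rw [Function.update_of_ne (show m ≠ i from fun e => hi (e ▸ hm)),
      Function.update_of_ne (show m ≠ j from fun e => hjs (e ▸ hm))]

lemma memBv_forward {n : ℕ} {α β : Fin n → ℕ} (h : memBv α β) (k : Fin n) :
    (∑ m ∈ Finset.univ.filter (fun m => k ≤ m), β m) ≤
      ∑ m ∈ Finset.univ.filter (fun m => k ≤ m), α m := by
  induction h with
  | base => exact le_refl _
  | step v i j hij hj hv ih =>
    by_cases hki : k ≤ i
    · rw [sum_move_mem v i j hij.ne hj _ (by simp [hki]) (by simp [hki.trans hij.le])]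
      exact ih
    · by_cases hkj : k ≤ j
      · have h1 := sum_move_notmem v i j hj (Finset.univ.filter (fun m => k ≤ m))
          (by simp [hki]) (by simp [hkj])
        omega
      · rw [sum_move_nn v i j _ (by simp [hki]) (by simp [hkj])]
        exact ih

lemma memBv_backward {n : ℕ} (β : Fin n → ℕ) :
    ∀ N (α : Fin n → ℕ), (∑ m : Fin n, ((m : ℕ) * α m)) = N →
      (∑ m, α m = ∑ m, β m) →
      (∀ k : Fin n, 1 ≤ (k : ℕ) →
        (∑ m ∈ Finset.univ.filter (fun m => k ≤ m), β m) ≤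
          ∑ m ∈ Finset.univ.filter (fun m => k ≤ m), α m) →
      memBv α β := by
  intro N
  induction N using Nat.strong_induction_on with
  | _ N ih =>
  intro α hN htot hcond
  by_cases hab : α = β
  · exact hab ▸ memBv.base
  -- j : the largest index where α and β differ
  have hD : (univ.filter (fun m => α m ≠ β m)).Nonempty := by
    rcases Function.ne_iff.1 hab with ⟨m, hm⟩
    exact ⟨m, by simp [hm]⟩
  set j := (univ.filter (fun m => α m ≠ β m)).max' hD with hjdef
  have hjne : α j ≠ β j := by
    have := Finset.max'_mem _ hD
    rw [← hjdef] at this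
    simpa using this
  have hbig : ∀ m, j < m → α m = β m := by
    intro m hm
    by_contra hne
    exact absurd (Finset.le_max' _ m (by simp [hne])) (not_le.2 hm)
  have htail_eq : ∑ m ∈ univ.filter (fun m => j < m), α m
      = ∑ m ∈ univ.filter (fun m => j < m), β m :=
    Finset.sum_congr rfl fun m hm => hbig m (by simpa using hm)
  have hins : univ.filter (fun m : Fin n => j ≤ m)
      = insert j (univ.filter (fun m => j < m)) := by
    ext m
    simp only [Finset.mem_filter, Finset.mem_insert, Finset.mem_univ, true_and,
      Fin.le_def, Fin.lt_def, Fin.ext_iff]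
    omega
  have hsplit : ∀ x : Fin n → ℕ, ∑ m, x m
      = (∑ m ∈ univ.filter (fun m => m < j), x m)
        + (x j + ∑ m ∈ univ.filter (fun m => j < m), x m) := by
    intro x
    rw [← Finset.sum_filter_add_sum_filter_not univ (fun m => m < j) x]
    congr 1
    have hnotlt : univ.filter (fun m : Fin n => ¬ m < j) = univ.filter (fun m => j ≤ m) := by
      simp only [not_lt]
    rw [hnotlt, hins, Finset.sum_insert (by simp)]
  -- j is not the first index
  have hj1 : 1 ≤ (j : ℕ) := by
    by_contra hj1
    have hj0 : (j : ℕ) = 0 := by omega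
    have hall : ∀ m, m ≠ j → α m = β m := by
      intro m hm
      refine hbig m ?_
      rw [Fin.lt_def, hj0]
      rcases Nat.eq_zero_or_pos (m : ℕ) with h0 | h0
      · exact absurd (Fin.ext (by omega) : m = j) hm
      · exact h0
    have hrest : ∑ m ∈ univ.erase j, α m = ∑ m ∈ univ.erase j, β m :=
      Finset.sum_congr rfl fun m hm => hall m (Finset.mem_erase.1 hm).1
    have h1 : ∑ m, α m = α j + ∑ m ∈ univ.erase j, α m :=
      (Finset.add_sum_erase univ α (mem_univ j)).symm
    have h2 : ∑ m, β m = β j + ∑ m ∈ univ.erase j, β m :=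
      (Finset.add_sum_erase univ β (mem_univ j)).symm
    omega
  have hx : ∀ x : Fin n → ℕ, ∑ m ∈ univ.filter (fun m => j ≤ m), x m
      = x j + ∑ m ∈ univ.filter (fun m => j < m), x m := by
    intro x
    rw [hins, Finset.sum_insert (by simp)]
  have hjlt : β j < α j := by
    have hc := hcond j hj1
    rw [hx, hx] at hc
    omega
  -- find i : the largest index < j with α i < β i
  have hE : (univ.filter (fun m => m < j ∧ α m < β m)).Nonempty := by
    by_contra hE
    rw [Finset.not_nonempty_iff_eq_empty] at hE
    have hle : ∀ m ∈ univ.filter (fun m : Fin n => m < j), β m ≤ α m := by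
      intro m hm
      simp only [Finset.mem_filter, Finset.mem_univ, true_and] at hm
      by_contra h3
      have : m ∈ univ.filter (fun m => m < j ∧ α m < β m) := by
        simp [hm, not_le.1 h3]
      rw [hE] at this
      exact absurd this (Finset.notMem_empty m)
    have hs := Finset.sum_le_sum hle
    have h1 := hsplit α
    have h2 := hsplit β
    omega
  set i := (univ.filter (fun m => m < j ∧ α m < β m)).max' hE with hidef
  have hiE : i < j ∧ α i < β i := by
    have := Finset.max'_mem _ hE
    rw [← hidef] at this
    simpa using this
  obtain ⟨hij, hαβi⟩ := hiE
  have hmid : ∀ m, i < m → m < j → β m ≤ α m := by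
    intro m h1 h2
    by_contra h3
    exact absurd (Finset.le_max' _ m (by simp [h2, not_le.1 h3])) (not_le.2 h1)
  have hstrict : ∀ k : Fin n, i < k → k ≤ j →
      (∑ m ∈ univ.filter (fun m => k ≤ m), β m) <
        ∑ m ∈ univ.filter (fun m => k ≤ m), α m := by
    intro k hik hkj
    apply Finset.sum_lt_sum
    · intro m hm
      simp only [Finset.mem_filter, Finset.mem_univ, true_and] at hm
      rcases lt_trichotomy m j with h | h | h
      · exact hmid m (lt_of_lt_of_le hik hm) h
      · exact h ▸ hjlt.le
      · exact (hbig m h).ge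
    · exact ⟨j, by simp [hkj], hjlt⟩
  have hαj : 0 < α j := by omega
  set α' := Function.update (Function.update α j (α j - 1)) i (α i + 1) with hα'
  have hstep : memBv α α' := memBv.step α i j hij hαj memBv.base
  have htot' : ∑ m, α' m = ∑ m, β m := by
    rw [hα', sum_move_mem α i j hij.ne hαj univ (mem_univ i) (mem_univ j)]
    exact htot
  have hcond' : ∀ k : Fin n, 1 ≤ (k : ℕ) →
      (∑ m ∈ univ.filter (fun m => k ≤ m), β m) ≤
        ∑ m ∈ univ.filter (fun m => k ≤ m), α' m := by
    intro k hk
    by_cases hki : k ≤ i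
    · rw [hα', sum_move_mem α i j hij.ne hαj _ (by simp [hki]) (by simp [hki.trans hij.le])]
      exact hcond k hk
    · by_cases hkj : k ≤ j
      · have h1 := sum_move_notmem α i j hαj (univ.filter (fun m => k ≤ m))
          (by simp [hki]) (by simp [hkj])
        have h2 := hstrict k (not_le.1 hki) hkj
        rw [hα']
        omega
      · rw [hα', sum_move_nn α i j _ (by simp [hki]) (by simp [hkj])]
        exact hcond k hk
  have hmeas : (∑ m : Fin n, ((m : ℕ) * α' m)) < N := by
    rw [← hN]
    have hji : j ∈ (univ.erase i) := Finset.mem_erase.2 ⟨hij.ne', mem_univ j⟩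
    rw [← Finset.add_sum_erase univ (fun m : Fin n => (m : ℕ) * α' m) (mem_univ i),
        ← Finset.add_sum_erase _ (fun m : Fin n => (m : ℕ) * α' m) hji,
        ← Finset.add_sum_erase univ (fun m : Fin n => (m : ℕ) * α m) (mem_univ i),
        ← Finset.add_sum_erase _ (fun m : Fin n => (m : ℕ) * α m) hji]
    have e1 : α' i = α i + 1 := by rw [hα']; simp
    have e2 : α' j = α j - 1 := by
      rw [hα', Function.update_of_ne hij.ne', Function.update_self]
    have e3 : ∑ m ∈ (univ.erase i).erase j, (m : ℕ) * α' m
        = ∑ m ∈ (univ.erase i).erase j, (m : ℕ) * α m := by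
      refine Finset.sum_congr rfl fun m hm => ?_
      have hm' := Finset.mem_erase.1 hm
      have hm'' := Finset.mem_erase.1 hm'.2
      rw [hα', Function.update_of_ne hm''.1, Function.update_of_ne hm'.1]
    rw [e1, e2, e3]
    have hmul : (j : ℕ) * α j = (j : ℕ) * (α j - 1) + j := by
      have hv : α j = (α j - 1) + 1 := by omega
      calc (j : ℕ) * α j = (j : ℕ) * ((α j - 1) + 1) := by rw [← hv]
        _ = (j : ℕ) * (α j - 1) + j := by ring
    have hadd : (i : ℕ) * (α i + 1) = (i : ℕ) * α i + i := by ring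
    have hij' : (i : ℕ) < (j : ℕ) := hij
    rw [hadd, hmul]
    omega
  exact memBv_trans hstep (ih _ hmeas α' rfl htot' hcond')

/-- De Negri: for monomials `w_1 = X^α`, `w_2 = X^β` of the same degree,
`w_2 ∈ B(w_1)` iff `Σ_{i=k}^n β_i ≤ Σ_{i=k}^n α_i` for all `2 ≤ k ≤ n`
(here indices are 0-based: `k` ranges over positions with `1 ≤ k`). -/
theorem memBv_iff_tail_sums {n : ℕ} (α β : Fin n → ℕ) (h : ∑ i, α i = ∑ i, β i) :
    memBv α β ↔ ∀ k : Fin n, 1 ≤ (k : ℕ) →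
      (∑ i ∈ Finset.univ.filter (fun i => k ≤ i), β i) ≤
        (∑ i ∈ Finset.univ.filter (fun i => k ≤ i), α i) := by
  constructor
  · intro hm k _
    exact memBv_forward hm k
  · intro hc
    exact memBv_backward β _ α rfl h hc
end

section
/- Principal strongly stable sets are closed under sorting: if u_1, u_2 ∈ B(w) for a monomial w (so u_1, u_2, w all have the same degree), then both components of sort(u_1,u_2) belong to B(w). -/
/-- `memB w v` means `v ∈ B(w)`: `B(w)` is the closure of `{w}` under replacing an
occurring variable of index `j` by a variable of index `i < j` (i.e. replacing `X_j`
by `X_i` with `X_i > X_j`). -/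
inductive memB (w : Multiset ℕ) : Multiset ℕ → Prop
  | base : memB w w
  | step (v : Multiset ℕ) (i j : ℕ) (hij : i < j) (hj : j ∈ v) (hv : memB w v) :
      memB w (i ::ₘ v.erase j)

/-! ### Counting functions -/

def fcnt (v : Multiset ℕ) (t : ℕ) : ℕ := Multiset.card (v.filter (t ≤ ·))

lemma fcnt_cons (a : ℕ) (v : Multiset ℕ) (t : ℕ) :
    fcnt (a ::ₘ v) t = fcnt v t + if t ≤ a then 1 else 0 := by
  simp only [fcnt, Multiset.filter_cons]
  split <;> simp [add_comm]

lemma fcnt_zero (v : Multiset ℕ) : fcnt v 0 = Multiset.card v := by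
  unfold fcnt
  rw [Multiset.filter_eq_self.2 (fun a _ => Nat.zero_le a)]

lemma fcnt_add (u v : Multiset ℕ) (t : ℕ) : fcnt (u + v) t = fcnt u t + fcnt v t := by
  simp [fcnt, Multiset.filter_add]

lemma fcnt_le_card (v : Multiset ℕ) (t : ℕ) : fcnt v t ≤ Multiset.card v :=
  Multiset.card_le_card (Multiset.filter_le _ _)

lemma fcnt_mono (v : Multiset ℕ) {s t : ℕ} (h : s ≤ t) : fcnt v t ≤ fcnt v s := by
  apply Multiset.card_le_card
  exact Multiset.monotone_filter_right v (fun b hb => le_trans h hb)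

lemma fcnt_count (v : Multiset ℕ) (t : ℕ) :
    fcnt v t = fcnt v (t + 1) + v.count t := by
  induction v using Multiset.induction with
  | empty => simp [fcnt]
  | cons a v ih =>
      rw [fcnt_cons, fcnt_cons, Multiset.count_cons, ih]
      rcases lt_trichotomy a t with h | h | h
      · rw [if_neg (by omega), if_neg (by omega), if_neg (by omega)]; omega
      · subst h; rw [if_pos le_rfl, if_neg (by omega), if_pos rfl]; omega
      · rw [if_pos (by omega), if_pos (by omega), if_neg (by omega)]; omega

lemma eq_of_fcnt {v w : Multiset ℕ} (h : ∀ t, fcnt v t = fcnt w t) : v = w := by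
  ext a
  have h1 := fcnt_count v a
  have h2 := fcnt_count w a
  have := h a
  have := h (a + 1)
  omega

lemma fcnt_sum (v : Multiset ℕ) (n : ℕ) (h : ∀ x ∈ v, x < n) :
    v.sum = ∑ t ∈ Finset.range n, fcnt v (t + 1) := by
  induction v using Multiset.induction with
  | empty => simp [fcnt]
  | cons a v ih =>
      have ha : a < n := h a (Multiset.mem_cons_self a v)
      have hv : ∀ x ∈ v, x < n := fun x hx => h x (Multiset.mem_cons_of_mem hx)
      rw [Multiset.sum_cons, ih hv]
      have h1 : ∀ t ∈ Finset.range n, fcnt (a ::ₘ v) (t + 1)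
          = fcnt v (t + 1) + if t + 1 ≤ a then 1 else 0 := fun t _ => fcnt_cons a v (t + 1)
      rw [Finset.sum_congr rfl h1, Finset.sum_add_distrib]
      have h2 : ∑ t ∈ Finset.range n, (if t + 1 ≤ a then (1:ℕ) else 0) = a := by
        rw [Finset.sum_boole]
        have : (Finset.range n).filter (fun t => t + 1 ≤ a) = Finset.range a := by
          ext x; simp; omega
        rw [this, Finset.card_range]; simp
      omega

lemma memB_card {w v : Multiset ℕ} (h : memB w v) : Multiset.card v = Multiset.card w := by
  induction h with
  | base => rfl
  | step v i j hij hj hv ih =>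
      have h1 := Multiset.card_erase_add_one hj
      rw [Multiset.card_cons]
      omega

lemma memB_fcnt {w v : Multiset ℕ} (h : memB w v) (t : ℕ) : fcnt v t ≤ fcnt w t := by
  induction h with
  | base => exact le_refl _
  | step v i j hij hj hv ih =>
      have hv' : v = j ::ₘ v.erase j := (Multiset.cons_erase hj).symm
      have h1 : fcnt v t = fcnt (v.erase j) t + if t ≤ j then 1 else 0 := by
        conv_lhs => rw [hv']
        exact fcnt_cons _ _ _
      have h2 : fcnt (i ::ₘ v.erase j) t = fcnt (v.erase j) t + if t ≤ i then 1 else 0 :=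
        fcnt_cons _ _ _
      have h3 : (if t ≤ i then (1:ℕ) else 0) ≤ if t ≤ j then 1 else 0 := by
        split_ifs <;> omega
      omega

lemma exists_strict {v w : Multiset ℕ} (hcard : Multiset.card v = Multiset.card w)
    (hle : ∀ t, fcnt v t ≤ fcnt w t) (hne : v ≠ w) :
    ∃ t, fcnt v (t + 1) < fcnt w (t + 1) := by
  by_contra hcon
  push_neg at hcon
  apply hne
  apply eq_of_fcnt
  intro t
  cases t with
  | zero => rw [fcnt_zero, fcnt_zero, hcard]
  | succ t => exact le_antisymm (hle _) (hcon t)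

lemma sum_lt_of_strict {v w : Multiset ℕ} (hle : ∀ t, fcnt v t ≤ fcnt w t) (t₀ : ℕ)
    (hst : fcnt v (t₀ + 1) < fcnt w (t₀ + 1)) : v.sum < w.sum := by
  set n := (v + w).sum + t₀ + 2 with hn
  have hv : ∀ x ∈ v, x < n := by
    intro x hx
    have : x ≤ v.sum := Multiset.le_sum_of_mem hx
    have : v.sum ≤ (v + w).sum := by rw [Multiset.sum_add]; omega
    omega
  have hw : ∀ x ∈ w, x < n := by
    intro x hx
    have : x ≤ w.sum := Multiset.le_sum_of_mem hx
    have : w.sum ≤ (v + w).sum := by rw [Multiset.sum_add]; omega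
    omega
  rw [fcnt_sum v n hv, fcnt_sum w n hw]
  apply Finset.sum_lt_sum
  · intro i _; exact hle _
  · exact ⟨t₀, Finset.mem_range.2 (by omega), hst⟩

lemma memB_of_fcnt (w : Multiset ℕ) (n : ℕ) : ∀ v : Multiset ℕ, w.sum - v.sum ≤ n →
    Multiset.card v = Multiset.card w → (∀ t, fcnt v t ≤ fcnt w t) → memB w v := by
  induction n with
  | zero =>
      intro v hb hcard hle
      by_cases hvw : v = w
      · rw [hvw]; exact memB.base
      · obtain ⟨t₀, ht₀⟩ := exists_strict hcard hle hvw
        have := sum_lt_of_strict hle t₀ ht₀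
        omega
  | succ n ih =>
      intro v hb hcard hle
      by_cases hvw : v = w
      · rw [hvw]; exact memB.base
      · have hex : ∃ t, fcnt v (t + 1) < fcnt w (t + 1) := exists_strict hcard hle hvw
        set t₀ := Nat.find hex with ht₀def
        have ht₀ : fcnt v (t₀ + 1) < fcnt w (t₀ + 1) := Nat.find_spec hex
        have hsumlt := sum_lt_of_strict hle t₀ ht₀
        -- t₀ ∈ v
        have hcnt : fcnt v t₀ = fcnt v (t₀ + 1) + v.count t₀ := fcnt_count v t₀
        have hge : fcnt w t₀ ≤ fcnt v t₀ := by
          cases ht : t₀ with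
          | zero => rw [fcnt_zero, fcnt_zero, hcard]
          | succ s =>
              have hmin : ¬ fcnt v (s + 1) < fcnt w (s + 1) :=
                Nat.find_min hex (by omega)
              omega
        have hwm : fcnt w (t₀ + 1) ≤ fcnt w t₀ := fcnt_mono w (by omega)
        have htv : t₀ ∈ v := by
          rw [← Multiset.count_pos]; omega
        have hve : v = t₀ ::ₘ v.erase t₀ := (Multiset.cons_erase htv).symm
        set v' : Multiset ℕ := (t₀ + 1) ::ₘ v.erase t₀ with hv'def
        have hcard' : Multiset.card v' = Multiset.card v := by
          rw [hv'def]
          conv_rhs => rw [hve]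
          rw [Multiset.card_cons, Multiset.card_cons]
        have hsum' : v'.sum = v.sum + 1 := by
          rw [hv'def]
          conv_rhs => rw [hve]
          rw [Multiset.sum_cons, Multiset.sum_cons]
          omega
        have hle' : ∀ τ, fcnt v' τ ≤ fcnt w τ := by
          intro τ
          have e1 : fcnt v τ = fcnt (v.erase t₀) τ + if τ ≤ t₀ then 1 else 0 := by
            conv_lhs => rw [hve]
            exact fcnt_cons _ _ _
          have e2 : fcnt v' τ = fcnt (v.erase t₀) τ + if τ ≤ t₀ + 1 then 1 else 0 :=
            fcnt_cons _ _ _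
          rcases lt_trichotomy τ (t₀ + 1) with h | h | h
          · rw [if_pos (by omega)] at e1 e2
            have := hle τ; omega
          · subst h
            rw [if_neg (by omega)] at e1
            rw [if_pos le_rfl] at e2
            omega
          · rw [if_neg (by omega)] at e1
            rw [if_neg (by omega)] at e2
            have := hle τ; omega
        have hB : memB w v' := ih v' (by omega) (by rw [hcard']; exact hcard) hle'
        have hstep := memB.step v' t₀ (t₀ + 1) (by omega) (Multiset.mem_cons_self _ _) hB
        have herase : v'.erase (t₀ + 1) = v.erase t₀ := Multiset.erase_cons_head _ _
        rw [herase] at hstep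
        rwa [← hve] at hstep

/-! ### evens / odds lemmas -/

lemma shiftE (l : List ℕ) : ∀ n : ℕ,
    (((l.zipIdx (n + 1)).map Prod.swap).filter (fun p => p.1 % 2 == 0)).map Prod.snd
      = (((l.zipIdx n).map Prod.swap).filter (fun p => p.1 % 2 == 1)).map Prod.snd := by
  induction l with
  | nil => intro n; rfl
  | cons a l ih =>
      intro n
      have hc : (((n + 1) % 2 == 0) : Bool) = (n % 2 == 1) := by
        rcases Nat.mod_two_eq_zero_or_one n with h | h <;> simp [Nat.add_mod, h]
      rw [List.zipIdx_cons, List.zipIdx_cons, List.map_cons, List.map_cons, Prod.swap_prod_mk, Prod.swap_prod_mk, List.filter_cons, List.filter_cons]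
      simp only [hc]
      cases hb : ((n % 2 == 1) : Bool) <;> simp [hb, ih (n + 1)]

lemma shiftO (l : List ℕ) : ∀ n : ℕ,
    (((l.zipIdx (n + 1)).map Prod.swap).filter (fun p => p.1 % 2 == 1)).map Prod.snd
      = (((l.zipIdx n).map Prod.swap).filter (fun p => p.1 % 2 == 0)).map Prod.snd := by
  induction l with
  | nil => intro n; rfl
  | cons a l ih =>
      intro n
      have hc : (((n + 1) % 2 == 1) : Bool) = (n % 2 == 0) := by
        rcases Nat.mod_two_eq_zero_or_one n with h | h <;> simp [Nat.add_mod, h]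
      rw [List.zipIdx_cons, List.zipIdx_cons, List.map_cons, List.map_cons, Prod.swap_prod_mk, Prod.swap_prod_mk, List.filter_cons, List.filter_cons]
      simp only [hc]
      cases hb : ((n % 2 == 0) : Bool) <;> simp [hb, ih (n + 1)]

lemma enum_eq_enumFrom (l : List ℕ) : l.zipIdx.map Prod.swap = (l.zipIdx 0).map Prod.swap := rfl

lemma eo_length : ∀ l : List ℕ, (evens l).length = (l.length + 1) / 2
    ∧ (odds l).length = l.length / 2 := by
  intro l
  induction l with
  | nil => constructor <;> rfl
  | cons a l ih =>
      rw [evens_cons, odds_cons]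
      simp only [List.length_cons]
      omega

lemma eo_add : ∀ l : List ℕ, ((evens l : List ℕ) : Multiset ℕ) + ((odds l : List ℕ) : Multiset ℕ)
    = (l : Multiset ℕ) := by
  intro l
  induction l with
  | nil => rfl
  | cons a l ih =>
      rw [evens_cons, odds_cons, ← Multiset.cons_coe, ← Multiset.cons_coe]
      rw [Multiset.cons_add, add_comm, ih]

lemma key_count (t : ℕ) : ∀ (n : ℕ) (l : List ℕ), l.length ≤ n → l.Pairwise (· ≤ ·) →
    l.length % 2 = 0 →
    2 * fcnt ↑(evens l) t ≤ fcnt ↑l t ∧ 2 * fcnt ↑(odds l) t ≤ fcnt ↑l t + 1 := by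
  intro n
  induction n with
  | zero =>
      intro l hlen _ _
      have : l = [] := List.eq_nil_of_length_eq_zero (by omega)
      subst this
      constructor <;> simp [evens, odds, fcnt]
  | succ n ih =>
      intro l hlen hsort hpar
      match l with
      | [] => constructor <;> simp [evens, odds, fcnt]
      | [a] => simp at hpar
      | a :: b :: l =>
          have hs1 := List.pairwise_cons.mp hsort
          have hs2 := List.pairwise_cons.mp hs1.2
          have hab : a ≤ b := hs1.1 b (by simp)
          have hbl : ∀ x ∈ l, b ≤ x := hs2.1
          have hsl : l.Pairwise (· ≤ ·) := hs2.2
          have hlenl : l.length ≤ n := by simp at hlen; omega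
          have hparl : l.length % 2 = 0 := by
            simp only [List.length_cons] at hpar; omega
          obtain ⟨ihE, ihO⟩ := ih l hlenl hsl hparl
          simp only [evens_cons, odds_cons, ← Multiset.cons_coe, fcnt_cons]
          have holen : fcnt ↑(odds l) t ≤ (odds l).length := by
            have h := fcnt_le_card (↑(odds l) : Multiset ℕ) t
            rwa [Multiset.coe_card] at h
          have hol2 := (eo_length l).2
          constructor
          · by_cases hpa : t ≤ a <;> by_cases hpb : t ≤ b <;>
              simp only [if_pos, if_neg, hpa, hpb, if_true, if_false] <;> omega
          · by_cases hpa : t ≤ a <;> by_cases hpb : t ≤ b <;>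
              simp only [if_pos, if_neg, hpa, hpb, if_true, if_false] <;> try omega
            all_goals {
              have hall : fcnt ↑l t = l.length := by
                unfold fcnt
                rw [Multiset.filter_eq_self.2 (fun x hx => le_trans hpb (hbl x (by
                  rwa [Multiset.mem_coe] at hx)))]
                exact Multiset.coe_card l
              omega }

/-! ### Main theorem -/

/-- principal strongly stable sets are closed under sorting: if
`u_1, u_2 ∈ B(w)` then both components of `sort(u_1,u_2)` belong to `B(w)`. -/
theorem memB_sortPair (w u₁ u₂ : Multiset ℕ) (h₁ : memB w u₁) (h₂ : memB w u₂) :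
    memB w (sortPair u₁ u₂).1 ∧ memB w (sortPair u₁ u₂).2 := by
  set l := stdList (u₁ + u₂) with hl
  have hcoe : (l : Multiset ℕ) = u₁ + u₂ := Multiset.sort_eq _ _
  have hsort : l.Pairwise (· ≤ ·) := Multiset.pairwise_sort _ _
  have hlen : l.length = Multiset.card u₁ + Multiset.card u₂ := by
    rw [← Multiset.coe_card, hcoe, Multiset.card_add]
  have hc1 : Multiset.card u₁ = Multiset.card w := memB_card h₁
  have hc2 : Multiset.card u₂ = Multiset.card w := memB_card h₂
  have hpar : l.length % 2 = 0 := by omega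
  have hfl : ∀ t, fcnt ↑l t ≤ 2 * fcnt w t := by
    intro t
    rw [hcoe, fcnt_add]
    have := memB_fcnt h₁ t
    have := memB_fcnt h₂ t
    omega
  have hP1 : (sortPair u₁ u₂).1 = ((evens l : List ℕ) : Multiset ℕ) := rfl
  have hP2 : (sortPair u₁ u₂).2 = ((odds l : List ℕ) : Multiset ℕ) := rfl
  have helen := (eo_length l).1
  have holen := (eo_length l).2
  constructor
  · rw [hP1]
    apply memB_of_fcnt w w.sum _ (Nat.sub_le _ _)
    · rw [Multiset.coe_card]; omega
    · intro t
      have := (key_count t l.length l le_rfl hsort hpar).1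
      have := hfl t
      omega
  · rw [hP2]
    apply memB_of_fcnt w w.sum _ (Nat.sub_le _ _)
    · rw [Multiset.coe_card]; omega
    · intro t
      have := (key_count t l.length l le_rfl hsort hpar).2
      have := hfl t
      omega
end

section
/- Swapping an out-of-order pair strictly decreases the inversion number: let A be a c×d matrix with entries in a totally ordered set, and suppose A_{j_1 k_1} < A_{j_2 k_2} with (k_1,j_1) <_lex (k_2,j_2). Let A' be obtained from A by swapping these two entries. Then e_{A'} < e_A. -/
/-- Column-major lexicographic order on matrix positions `(row, col)`:
`(j,k) <_pos (j',k')` iff `(k,j) <_lex (k',j')`. -/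
def posLt {c d : ℕ} (p q : Fin c × Fin d) : Prop :=
  p.2 < q.2 ∨ (p.2 = q.2 ∧ p.1 < q.1)

instance {c d : ℕ} : DecidableRel (@posLt c d) := fun _ _ => by
  unfold posLt; infer_instance

/-- The number of inversions `e_A` of a matrix `A` over a totally ordered set:
the number of pairs of positions `((j,k),(j',k'))` with `(k,j) <_lex (k',j')`
and `A_{j'k'} > A_{jk}`. -/
def invNum {c d : ℕ} {α : Type*} [LinearOrder α] (A : Fin c → Fin d → α) : ℕ :=
  (Finset.univ.filter fun p : (Fin c × Fin d) × (Fin c × Fin d) =>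
    posLt p.1 p.2 ∧ A p.1.1 p.1.2 < A p.2.1 p.2.2).card

namespace InvAux

variable {c d : ℕ}

/-- Linearize a position into a natural number. -/
def key (p : Fin c × Fin d) : ℕ := p.2.val * c + p.1.val

lemma key_lt_of_col_lt {p q : Fin c × Fin d} (h : p.2.val < q.2.val) :
    key p < key q := by
  have h1 : (p.2.val + 1) * c ≤ q.2.val * c :=
    Nat.mul_le_mul_right _ (Nat.succ_le_of_lt h)
  have h2 : p.1.val < c := p.1.isLt
  calc key p = p.2.val * c + p.1.val := rfl
    _ < p.2.val * c + c := by omega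
    _ = (p.2.val + 1) * c := by ring
    _ ≤ q.2.val * c := h1
    _ ≤ key q := Nat.le_add_right _ _

lemma posLt_iff (p q : Fin c × Fin d) : posLt p q ↔ key p < key q := by
  constructor
  · rintro (h | ⟨h, h'⟩)
    · exact key_lt_of_col_lt h
    · have hv : p.2.val = q.2.val := by exact_mod_cast congrArg Fin.val h
      have hm : p.2.val * c = q.2.val * c := by rw [hv]
      have h1 : p.1.val < q.1.val := h'
      unfold key; omega
  · intro h
    rcases lt_trichotomy p.2 q.2 with h2 | h2 | h2
    · exact Or.inl h2
    · refine Or.inr ⟨h2, ?_⟩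
      have hv : p.2.val = q.2.val := by exact_mod_cast congrArg Fin.val h2
      have hm : p.2.val * c = q.2.val * c := by rw [hv]
      have hk := h
      unfold key at hk
      exact show p.1.val < q.1.val by omega
    · exact absurd (key_lt_of_col_lt h2) (by omega)

lemma key_injective : Function.Injective (key (c := c) (d := d)) := by
  intro p q h
  have h2 : p.2 = q.2 := by
    rcases lt_trichotomy p.2 q.2 with hh | hh | hh
    · exact absurd (key_lt_of_col_lt hh) (by omega)
    · exact hh
    · exact absurd (key_lt_of_col_lt hh) (by omega)
  have hv : p.2.val = q.2.val := by exact_mod_cast congrArg Fin.val h2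
  have hm : p.2.val * c = q.2.val * c := by rw [hv]
  have h1 : p.1 = q.1 := by
    unfold key at h
    exact Fin.ext (by omega)
  exact Prod.ext h1 h2

end InvAux

open InvAux in
/-- swapping an out-of-order pair strictly decreases the inversion
number: if `A_{j₁k₁} < A_{j₂k₂}` with `(k₁,j₁) <_lex (k₂,j₂)` and `A'` is obtained
from `A` by swapping these two entries, then `e_{A'} < e_A`. -/
theorem invNum_swap_lt {c d : ℕ} {α : Type*} [LinearOrder α] (A : Fin c → Fin d → α)
    (j₁ j₂ : Fin c) (k₁ k₂ : Fin d) (hpos : posLt (j₁, k₁) (j₂, k₂))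
    (hlt : A j₁ k₁ < A j₂ k₂) :
    invNum (fun j k =>
      if (j, k) = (j₁, k₁) then A j₂ k₂
      else if (j, k) = (j₂, k₂) then A j₁ k₁
      else A j k) < invNum A := by
  classical
  set P : Fin c × Fin d := (j₁, k₁) with hP
  set Q : Fin c × Fin d := (j₂, k₂) with hQ
  set a : Fin c × Fin d → α := fun x => A x.1 x.2 with ha
  have hPQ : posLt P Q := hpos
  have hkPQ : key P < key Q := (posLt_iff P Q).1 hPQ
  have hPneQ : P ≠ Q := by
    intro h
    have := congrArg key h
    omega
  set σ : Fin c × Fin d → Fin c × Fin d :=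
    fun x => if x = P then Q else if x = Q then P else x with hσ
  have hσP : σ P = Q := by simp [hσ]
  have hσQ : σ Q = P := by simp [hσ, hPneQ.symm]
  have hσother : ∀ x, x ≠ P → x ≠ Q → σ x = x := by
    intro x h1 h2; simp [hσ, h1, h2]
  have hσσ : ∀ x, σ (σ x) = x := by
    intro x
    by_cases h1 : x = P
    · rw [h1, hσP, hσQ]
    · by_cases h2 : x = Q
      · rw [h2, hσQ, hσP]
      · rw [hσother x h1 h2, hσother x h1 h2]
  have hσinj : Function.Injective σ := by
    intro x y h
    have := congrArg σ h
    rwa [hσσ, hσσ] at this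
  have hfun : (fun j k =>
      if (j, k) = (j₁, k₁) then A j₂ k₂
      else if (j, k) = (j₂, k₂) then A j₁ k₁
      else A j k) = fun j k => a (σ (j, k)) := by
    funext j k
    by_cases h1 : (j, k) = P
    · rw [hP] at h1
      simp only [h1]
      rw [if_pos trivial, ← hP, hσP]
    · by_cases h2 : (j, k) = Q
      · rw [hQ] at h2
        simp only [h2]
        rw [if_neg (by rw [← hP, ← h2]; exact fun h => h1 (h2 ▸ h)), if_pos trivial, ← hQ, hσQ]
      · rw [if_neg (by rw [← hP]; exact h1), if_neg (by rw [← hQ]; exact h2),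
          hσother _ h1 h2]
  rw [hfun]
  unfold invNum
  set S : Finset ((Fin c × Fin d) × (Fin c × Fin d)) :=
    Finset.univ.filter fun p => posLt p.1 p.2 ∧ A p.1.1 p.1.2 < A p.2.1 p.2.2 with hS
  set S' : Finset ((Fin c × Fin d) × (Fin c × Fin d)) :=
    Finset.univ.filter fun p => posLt p.1 p.2 ∧
      (fun j k => a (σ (j, k))) p.1.1 p.1.2 < (fun j k => a (σ (j, k))) p.2.1 p.2.2 with hS'
  have hmemS : ∀ z : (Fin c × Fin d) × (Fin c × Fin d),
      z ∈ S ↔ posLt z.1 z.2 ∧ a z.1 < a z.2 := by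
    intro z
    rw [hS, Finset.mem_filter]
    constructor
    · rintro ⟨-, h⟩; exact h
    · intro h; exact ⟨Finset.mem_univ _, h⟩
  have hmemS' : ∀ z : (Fin c × Fin d) × (Fin c × Fin d),
      z ∈ S' ↔ posLt z.1 z.2 ∧ a (σ z.1) < a (σ z.2) := by
    intro z
    rw [hS', Finset.mem_filter]
    constructor
    · rintro ⟨-, h⟩; exact h
    · intro h; exact ⟨Finset.mem_univ _, h⟩
  have hPQmem : (P, Q) ∈ S := (hmemS _).2 ⟨hPQ, hlt⟩
  have hmaps : ∀ z ∈ S', (if posLt (σ z.1) (σ z.2) then (σ z.1, σ z.2) else z) ∈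
      S.erase (P, Q) := by
    intro z hz
    obtain ⟨h1, h2⟩ := (hmemS' z).1 hz
    obtain ⟨x, y⟩ := z
    simp only at h1 h2 ⊢
    have hkxy : key x < key y := (posLt_iff x y).1 h1
    by_cases hps : posLt (σ x) (σ y)
    · rw [if_pos hps]
      refine Finset.mem_erase.2 ⟨?_, (hmemS _).2 ⟨hps, h2⟩⟩
      intro heq
      have hx : σ x = P := congrArg Prod.fst heq
      have hy : σ y = Q := congrArg Prod.snd heq
      have hx' : x = Q := by rw [← hσσ x, hx, hσP]
      have hy' : y = P := by rw [← hσσ y, hy, hσQ]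
      rw [hx', hy'] at hkxy
      omega
    · rw [if_neg hps]
      have hflip : key (σ y) < key (σ x) := by
        rcases Nat.lt_trichotomy (key (σ x)) (key (σ y)) with hh | hh | hh
        · exact absurd ((posLt_iff _ _).2 hh) hps
        · have : σ x = σ y := key_injective hh
          have : x = y := hσinj this
          rw [this] at hkxy; omega
        · exact hh
      by_cases hxP : x = P
      · by_cases hyQ : y = Q
        · rw [hxP, hyQ, hσP, hσQ] at h2
          exact absurd h2 (not_lt.2 hlt.le)
        · have hyP : y ≠ P := by
            intro h; rw [hxP, h] at hkxy; omega
          rw [hxP, hσP, hσother y hyP hyQ] at h2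
          refine Finset.mem_erase.2 ⟨?_, (hmemS _).2 ⟨h1, ?_⟩⟩
          · intro heq
            exact hyQ (congrArg Prod.snd heq)
          · rw [hxP]
            exact lt_trans hlt h2
      · by_cases hxQ : x = Q
        · have hyP : y ≠ P := by
            intro h; rw [hxQ, h] at hkxy; omega
          have hyQ : y ≠ Q := by
            intro h; rw [hxQ, h] at hkxy; omega
          rw [hxQ, hσQ, hσother y hyP hyQ] at hflip
          rw [hxQ] at hkxy
          omega
        · rw [hσother x hxP hxQ] at h2 hflip
          by_cases hyP : y = P
          · rw [hyP, hσP] at hflip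
            rw [hyP] at hkxy
            omega
          · by_cases hyQ : y = Q
            · rw [hyQ, hσQ] at h2
              refine Finset.mem_erase.2 ⟨?_, (hmemS _).2 ⟨h1, ?_⟩⟩
              · intro heq
                exact hxP (congrArg Prod.fst heq)
              · rw [hyQ]
                exact lt_trans h2 hlt
            · rw [hσother y hyP hyQ] at hflip
              omega
  have hinj : ∀ z ∈ S', ∀ z' ∈ S',
      (if posLt (σ z.1) (σ z.2) then (σ z.1, σ z.2) else z) =
      (if posLt (σ z'.1) (σ z'.2) then (σ z'.1, σ z'.2) else z') → z = z' := by
    intro z hz z' hz' heq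
    obtain ⟨h1, -⟩ := (hmemS' z).1 hz
    obtain ⟨h1', -⟩ := (hmemS' z').1 hz'
    by_cases hp : posLt (σ z.1) (σ z.2) <;> by_cases hp' : posLt (σ z'.1) (σ z'.2)
    · rw [if_pos hp, if_pos hp'] at heq
      have hx : σ z.1 = σ z'.1 := congrArg Prod.fst heq
      have hy : σ z.2 = σ z'.2 := congrArg Prod.snd heq
      exact Prod.ext (hσinj hx) (hσinj hy)
    · rw [if_pos hp, if_neg hp'] at heq
      exfalso
      have hx : σ z.1 = z'.1 := congrArg Prod.fst heq
      have hy : σ z.2 = z'.2 := congrArg Prod.snd heq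
      rw [← hx, ← hy, hσσ, hσσ] at hp'
      exact hp' h1
    · rw [if_neg hp, if_pos hp'] at heq
      exfalso
      have hx : z.1 = σ z'.1 := congrArg Prod.fst heq
      have hy : z.2 = σ z'.2 := congrArg Prod.snd heq
      rw [hx, hy, hσσ, hσσ] at hp
      exact hp h1'
    · rw [if_neg hp, if_neg hp'] at heq
      exact heq
  calc S'.card ≤ (S.erase (P, Q)).card :=
        Finset.card_le_card_of_injOn _ hmaps hinj
    _ < S.card := Finset.card_erase_lt_of_mem hPQmem
end

section
/- Let u,v be monomials of degrees p ≤ q with max(u) > min(v), and set p* = max{k : 1 ≤ k ≤ p and X_k^{(u)} > X_{q-k+1}^{(v)}}. Define û = (∏_{k=p*+1}^{p} X_k^{(u)})·(∏_{k=1}^{p*} X_{q-k+1}^{(v)}) and v̂ = (∏_{k=1}^{q-p*} X_k^{(v)})·(∏_{k=1}^{p*} X_k^{(u)}). Then max(û) ≤ min(v̂) and û v̂ = uv; hence (û, v̂) = ord(u,v). -/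
/-- `ord(u,v) = (Y_{q+1}⋯Y_{q+p}, Y_1⋯Y_q)` for `deg u = p ≤ q = deg v`. -/
def ordPair (u v : Multiset ℕ) : Multiset ℕ × Multiset ℕ :=
  ((((stdList (u + v)).drop (Multiset.card v) : List ℕ) : Multiset ℕ),
   (((stdList (u + v)).take (Multiset.card v) : List ℕ) : Multiset ℕ))

lemma stdList_coe (m : Multiset ℕ) : ((stdList m : List ℕ) : Multiset ℕ) = m :=
  Multiset.sort_eq _ _

lemma stdList_sorted (m : Multiset ℕ) : (stdList m).Pairwise (· ≤ ·) :=
  Multiset.pairwise_sort _ _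

lemma stdList_length (m : Multiset ℕ) : (stdList m).length = Multiset.card m :=
  Multiset.length_sort _

lemma mem_stdList {a : ℕ} {m : Multiset ℕ} : a ∈ stdList m ↔ a ∈ m :=
  Multiset.mem_sort _

/-- A sorted list is monotone in its (defaulted) entries, within range. -/
lemma sorted_getD_mono {l : List ℕ} (h : l.Pairwise (· ≤ ·)) {i j : ℕ}
    (hij : i ≤ j) (hj : j < l.length) : l.getD i 0 ≤ l.getD j 0 := by
  rw [List.getD_eq_getElem l 0 (by omega), List.getD_eq_getElem l 0 hj]
  have := h.rel_get_of_le (a := ⟨i, by omega⟩) (b := ⟨j, hj⟩) (by simp [Fin.le_def]; omega)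
  simpa using this

/-- In a sorted list, any member of `l.take n` is at most `l[n-1]` (when `n ≤ l.length`). -/
lemma mem_take_le_getD {l : List ℕ} (h : l.Pairwise (· ≤ ·)) {n a : ℕ}
    (ha : a ∈ l.take n) (hn : n ≤ l.length) : a ≤ l.getD (n - 1) 0 := by
  obtain ⟨i, hi, rfl⟩ := List.getElem_of_mem ha
  have hlen : (l.take n).length = min n l.length := List.length_take
  have hil : i < l.length := by omega
  have hin : i < n := by omega
  rw [List.getElem_take]
  rw [show (l[i]'hil) = l.getD i 0 from (List.getD_eq_getElem l 0 hil).symm]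
  exact sorted_getD_mono h (by omega) (by omega)

/-- In a sorted list, any member of `l.drop n` is at least `l[n]`. -/
lemma mem_drop_ge_getD {l : List ℕ} (h : l.Pairwise (· ≤ ·)) {n a : ℕ}
    (ha : a ∈ l.drop n) : l.getD n 0 ≤ a := by
  obtain ⟨i, hi, rfl⟩ := List.getElem_of_mem ha
  have hlen : (l.drop n).length = l.length - n := List.length_drop
  have hn : n < l.length := by omega
  rw [List.getElem_drop]
  rw [show (l[n + i]'(by omega)) = l.getD (n + i) 0 from (List.getD_eq_getElem l 0 (by omega)).symm]
  exact sorted_getD_mono h (by omega) (by omega)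

/-- Nonempty drop means the index is below the length. -/
lemma lt_length_of_mem_drop {l : List ℕ} {n a : ℕ} (ha : a ∈ l.drop n) : n < l.length := by
  by_contra hc
  simp [List.drop_eq_nil_of_le (le_of_not_gt hc)] at ha

/-- let `deg u = p ≤ q = deg v` with `max(u) > min(v)` (the largest
variable of `u` exceeds the smallest variable of `v`, i.e. the first index of `u`
is smaller than the last index of `v`), and let
`p* = max{k : 1 ≤ k ≤ p, X_k^{(u)} > X_{q-k+1}^{(v)}}`.  Then with
`û = (∏_{k=p*+1}^p X_k^{(u)})·(∏_{k=1}^{p*} X_{q-k+1}^{(v)})` and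
`v̂ = (∏_{k=1}^{q-p*} X_k^{(v)})·(∏_{k=1}^{p*} X_k^{(u)})`, one has
`max(û) ≤ min(v̂)`, `û v̂ = uv`, and `(û, v̂) = ord(u,v)`. -/
theorem ordPair_explicit (u v : Multiset ℕ)
    (hu : 1 ≤ Multiset.card u) (hpq : Multiset.card u ≤ Multiset.card v)
    (hmm : (stdList u).getD 0 0 < (stdList v).getD (Multiset.card v - 1) 0) :
    let p := Multiset.card u
    let q := Multiset.card v
    let lu := stdList u
    let lv := stdList v
    let ps := ((Finset.Icc 1 p).filter fun k => lu.getD (k - 1) 0 < lv.getD (q - k) 0).sup id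
    let uhat : Multiset ℕ := ((lu.drop ps : List ℕ) : Multiset ℕ) + ((lv.drop (q - ps) : List ℕ) : Multiset ℕ)
    let vhat : Multiset ℕ := ((lv.take (q - ps) : List ℕ) : Multiset ℕ) + ((lu.take ps : List ℕ) : Multiset ℕ)
    (∀ a ∈ uhat, ∀ b ∈ vhat, b ≤ a) ∧ uhat + vhat = u + v ∧ (uhat, vhat) = ordPair u v := by
  intro p q lu lv ps uhat vhat
  have hlu : lu.Pairwise (· ≤ ·) := Multiset.pairwise_sort _ _
  have hlv : lv.Pairwise (· ≤ ·) := Multiset.pairwise_sort _ _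
  have hlul : lu.length = p := Multiset.length_sort _
  have hlvl : lv.length = q := Multiset.length_sort _
  have hSne : ((Finset.Icc 1 p).filter fun k => lu.getD (k - 1) 0 < lv.getD (q - k) 0).Nonempty :=
    ⟨1, by
      simp only [Finset.mem_filter, Finset.mem_Icc]
      exact ⟨⟨le_rfl, hu⟩, by simpa using hmm⟩⟩
  have hpsS : ps ∈ (Finset.Icc 1 p).filter fun k => lu.getD (k - 1) 0 < lv.getD (q - k) 0 := by
    have h1 := Finset.max'_mem _ hSne
    rwa [Finset.max'_eq_sup', Finset.sup'_eq_sup hSne id] at h1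
  have hps1 : 1 ≤ ps := (Finset.mem_Icc.mp (Finset.mem_filter.mp hpsS).1).1
  have hpsp : ps ≤ p := (Finset.mem_Icc.mp (Finset.mem_filter.mp hpsS).1).2
  have hkey : lu.getD (ps - 1) 0 < lv.getD (q - ps) 0 := (Finset.mem_filter.mp hpsS).2
  have hmax : ps < p → lv.getD (q - ps - 1) 0 ≤ lu.getD ps 0 := by
    intro hlt
    by_contra hc
    push_neg at hc
    have hmem : ps + 1 ∈ (Finset.Icc 1 p).filter
        fun k => lu.getD (k - 1) 0 < lv.getD (q - k) 0 := by
      simp only [Finset.mem_filter, Finset.mem_Icc]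
      refine ⟨⟨by omega, by omega⟩, ?_⟩
      rw [show ps + 1 - 1 = ps from by omega, show q - (ps + 1) = q - ps - 1 from by omega]
      exact hc
    have hle : ps + 1 ≤ ps := Finset.le_sup (f := id) hmem
    omega
  -- part 1
  have part1 : ∀ a ∈ uhat, ∀ b ∈ vhat, b ≤ a := by
    intro a ha b hb
    rw [Multiset.mem_add] at ha hb
    simp only [Multiset.mem_coe] at ha hb
    rcases ha with ha | ha <;> rcases hb with hb | hb
    · -- a ∈ lu.drop ps, b ∈ lv.take (q - ps)
      have hpsP : ps < lu.length := lt_length_of_mem_drop ha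
      have h1 : b ≤ lv.getD (q - ps - 1) 0 := mem_take_le_getD hlv hb (by omega)
      have h2 : lu.getD ps 0 ≤ a := mem_drop_ge_getD hlu ha
      exact le_trans h1 (le_trans (hmax (by omega)) h2)
    · -- a ∈ lu.drop ps, b ∈ lu.take ps
      have hpsP : ps < lu.length := lt_length_of_mem_drop ha
      have h1 : b ≤ lu.getD (ps - 1) 0 := mem_take_le_getD hlu hb (by omega)
      have h2 : lu.getD (ps - 1) 0 ≤ lu.getD ps 0 := sorted_getD_mono hlu (by omega) (by omega)
      have h3 : lu.getD ps 0 ≤ a := mem_drop_ge_getD hlu ha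
      exact le_trans h1 (le_trans h2 h3)
    · -- a ∈ lv.drop (q - ps), b ∈ lv.take (q - ps)
      have hqps : q - ps < lv.length := lt_length_of_mem_drop ha
      have h1 : b ≤ lv.getD (q - ps - 1) 0 := mem_take_le_getD hlv hb (by omega)
      have h2 : lv.getD (q - ps - 1) 0 ≤ lv.getD (q - ps) 0 :=
        sorted_getD_mono hlv (by omega) (by omega)
      have h3 : lv.getD (q - ps) 0 ≤ a := mem_drop_ge_getD hlv ha
      exact le_trans h1 (le_trans h2 h3)
    · -- a ∈ lv.drop (q - ps), b ∈ lu.take ps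
      have h1 : b ≤ lu.getD (ps - 1) 0 := mem_take_le_getD hlu hb (by omega)
      have h2 : lv.getD (q - ps) 0 ≤ a := mem_drop_ge_getD hlv ha
      exact le_trans h1 (le_trans (le_of_lt hkey) h2)
  have part2 : uhat + vhat = u + v := by
    show (↑(lu.drop ps) + ↑(lv.drop (q - ps))) + (↑(lv.take (q - ps)) + ↑(lu.take ps))
        = u + v
    have hu' : (↑(lu.take ps) + ↑(lu.drop ps) : Multiset ℕ) = u := by
      rw [Multiset.coe_add, List.take_append_drop]
      exact stdList_coe u
    have hv' : (↑(lv.take (q - ps)) + ↑(lv.drop (q - ps)) : Multiset ℕ) = v := by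
      rw [Multiset.coe_add, List.take_append_drop]
      exact stdList_coe v
    rw [← hu', ← hv']
    abel
  refine ⟨part1, part2, ?_⟩
  -- part 3
  have hcv : Multiset.card vhat = q := by
    show Multiset.card (((lv.take (q - ps) : List ℕ) : Multiset ℕ)
        + ((lu.take ps : List ℕ) : Multiset ℕ)) = q
    rw [Multiset.card_add, Multiset.coe_card, Multiset.coe_card,
      List.length_take, List.length_take]
    omega
  set lw : List ℕ := stdList vhat ++ stdList uhat with hlw
  have hwperm : (↑lw : Multiset ℕ) = u + v := by
    show ((stdList vhat ++ stdList uhat : List ℕ) : Multiset ℕ) = u + v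
    rw [← Multiset.coe_add, stdList_coe, stdList_coe, ← part2]
    abel
  have hwsorted : lw.Pairwise (· ≤ ·) := by
    rw [hlw, List.pairwise_append]
    refine ⟨stdList_sorted _, stdList_sorted _, ?_⟩
    intro b hb a ha
    exact part1 a (mem_stdList.mp ha) b (mem_stdList.mp hb)
  have hstd : stdList (u + v) = lw := by
    refine List.Perm.eq_of_pairwise' (stdList_sorted _) hwsorted ?_
    rw [← Multiset.coe_eq_coe, hwperm]
    exact stdList_coe _
  have hlen : (stdList vhat).length = q := by
    rw [stdList_length]; exact hcv
  rw [ordPair]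
  refine Prod.ext ?_ ?_
  · show uhat = (((stdList (u + v)).drop q : List ℕ) : Multiset ℕ)
    rw [hstd, hlw, List.drop_left' hlen, stdList_coe]
  · show vhat = (((stdList (u + v)).take q : List ℕ) : Multiset ℕ)
    rw [hstd, hlw, List.take_left' hlen, stdList_coe]
end

section
/- Necessity of the min-max condition: if M = ⨆_{i=0}^s M_i is closed under comparability (notation as before), then max(u_{i n_i}) ≤ min(u_{(i+1) n_{i+1}}) for all 1 ≤ i ≤ s-1, where u_{i n_i} is the revlex-smallest element of M_i and max, min denote the largest and smallest variable dividing a monomial (under X_1 > ... > X_n). -/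
/-- Graded reverse-lex `u >_rev v` for equal-degree monomials. -/
def revGtM (u v : Multiset ℕ) : Prop :=
  ∃ k, (stdList u).getD k 0 < (stdList v).getD k 0 ∧
    ∀ k', k < k' → (stdList u).getD k' 0 = (stdList v).getD k' 0


lemma stdList_of_sorted {l : List ℕ} (h : l.Pairwise (· ≤ ·)) : stdList (↑l) = l :=
  List.Perm.eq_of_pairwise' (stdList_sorted _) h (Multiset.coe_eq_coe.mp (stdList_coe ↑l))

lemma sorted_getElem_mono {L : List ℕ} (h : L.Pairwise (· ≤ ·)) {a b : ℕ} (hab : a ≤ b)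
    (hb : b < L.length) : L[a]'(lt_of_le_of_lt hab hb) ≤ L[b] :=
  h.rel_get_of_le (by simpa [Fin.le_def] using hab)

lemma countP_lt_getElem_le {L : List ℕ} (h : L.Pairwise (· ≤ ·)) {j : ℕ} (hj : j < L.length) :
    L.countP (fun y => decide (y < L[j])) ≤ j := by
  calc L.countP (fun y => decide (y < L[j]))
      = (L.take j).countP (fun y => decide (y < L[j])) +
        (L.drop j).countP (fun y => decide (y < L[j])) := by
        rw [← List.countP_append, List.take_append_drop]
    _ ≤ j + 0 := by
        apply Nat.add_le_add
        · exact le_trans List.countP_le_length (by simp)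
        · apply Nat.le_of_eq
          rw [List.countP_eq_zero]
          intro a ha
          simp only [decide_eq_true_eq, not_lt]
          obtain ⟨k, hk, rfl⟩ := List.mem_iff_getElem.mp ha
          rw [List.getElem_drop]
          exact sorted_getElem_mono h (Nat.le_add_right j k) (by simp at hk ⊢; omega)
    _ = j := Nat.add_zero j

lemma le_countP_of_getElem_lt {L : List ℕ} (h : L.Pairwise (· ≤ ·)) {p : ℕ} (hp : p < L.length)
    {x : ℕ} (hlt : L[p] < x) :
    p + 1 ≤ L.countP (fun y => decide (y < x)) := by
  have h1 : (L.take (p+1)).countP (fun y => decide (y < x)) = p + 1 := by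
    rw [List.countP_eq_length.mpr, List.length_take]
    · omega
    · intro a ha
      simp only [decide_eq_true_eq]
      obtain ⟨k, hk, rfl⟩ := List.mem_iff_getElem.mp ha
      rw [List.getElem_take]
      have hkp : k ≤ p := by simp at hk; omega
      exact lt_of_le_of_lt (sorted_getElem_mono h hkp hp) hlt
  calc p + 1 = (L.take (p+1)).countP (fun y => decide (y < x)) := h1.symm
    _ ≤ L.countP (fun y => decide (y < x)) := (List.take_sublist _ _).countP_le

/-- Key merge lemma: the `(card v + k)`-th entry of the sorted merge dominates
the `k`-th entry of `stdList u`. -/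
lemma merge_ge (u v : Multiset ℕ) {k : ℕ} (hk : k < Multiset.card u) :
    (stdList u).getD k 0 ≤ (stdList (u + v)).getD (Multiset.card v + k) 0 := by
  set A := stdList u with hA
  set L := stdList (u + v) with hL
  have hAl : A.length = Multiset.card u := stdList_length u
  have hLl : L.length = Multiset.card u + Multiset.card v := by
    rw [hL, stdList_length]; simp
  have hkA : k < A.length := by omega
  have hkL : Multiset.card v + k < L.length := by omega
  rw [List.getD_eq_getElem _ _ hkA, List.getD_eq_getElem _ _ hkL]
  by_contra hcon
  push_neg at hcon
  set x := A[k] with hx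
  -- count elements < x
  have hperm : List.Perm L (A ++ stdList v) := by
    rw [← Multiset.coe_eq_coe]
    simp only [hA, hL, ← Multiset.coe_add, stdList_coe]
  have hcount : L.countP (fun y => decide (y < x)) =
      A.countP (fun y => decide (y < x)) + (stdList v).countP (fun y => decide (y < x)) := by
    rw [hperm.countP_eq, List.countP_append]
  have h1 : Multiset.card v + k + 1 ≤ L.countP (fun y => decide (y < x)) :=
    le_countP_of_getElem_lt (stdList_sorted _) hkL hcon
  have h2 : A.countP (fun y => decide (y < x)) ≤ k :=
    countP_lt_getElem_le (stdList_sorted _) hkA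
  have h3 : (stdList v).countP (fun y => decide (y < x)) ≤ Multiset.card v :=
    le_trans List.countP_le_length (le_of_eq (stdList_length v))
  omega

lemma take_le_drop {L : List ℕ} (h : L.Pairwise (· ≤ ·)) (c : ℕ) {x y : ℕ}
    (hx : x ∈ L.take c) (hy : y ∈ L.drop c) : x ≤ y := by
  have hp : List.Pairwise (· ≤ ·) (L.take c ++ L.drop c) := by
    rw [List.take_append_drop]; exact h
  exact (List.pairwise_append.mp hp).2.2 x hx y hy


/-- necessity of the min-max condition: if
`M = ⨆_{i=0}^s M_i` (setup as before: `M_0 = {X_1,…,X_n}`, `M_i` the revlex-indexed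
minimal generators of degree `d_i`) is closed under comparability, then
`max(u_{i n_i}) ≤ min(u_{(i+1) n_{i+1}})` for `1 ≤ i ≤ s-1`; in index terms, every
index occurring in `u_{(i+1) n_{i+1}}` is ≤ every index occurring in `u_{i n_i}`. -/
theorem necessity_min_max {s n : ℕ} {ni : Fin (s + 1) → ℕ}
    (U : (i : Fin (s + 1)) → Fin (ni i) → Multiset ℕ) (d : Fin (s + 1) → ℕ)
    (hni : ∀ i, 0 < ni i)
    (hd0 : d 0 = 1) (hdmono : Monotone d)
    (hcard : ∀ i j, Multiset.card (U i j) = d i)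
    (hn0 : ni 0 = n) (hvar0 : ∀ j : Fin (ni 0), U 0 j = {(j : ℕ)})
    (hvars : ∀ i j, ∀ a ∈ U i j, a < n)
    (hrev : ∀ i (j j' : Fin (ni i)), j < j' → revGtM (U i j) (U i j'))
    (hOrd : ∀ (i i' : Fin (s + 1)) (j : Fin (ni i)) (j' : Fin (ni i')), i < i' →
      ∃ l l', ordPair (U i j) (U i' j') = (U i l, U i' l'))
    (hSort : ∀ (i : Fin (s + 1)) (j j' : Fin (ni i)),
      ∃ l l', sortPair (U i j) (U i j') = (U i l, U i l')) :
    ∀ (i : Fin (s + 1)) (_ : 0 < (i : ℕ)) (hi : (i : ℕ) < s),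
      ∀ a ∈ U i ⟨ni i - 1, Nat.sub_lt (hni i) Nat.one_pos⟩,
      ∀ b ∈ U ⟨(i : ℕ) + 1, Nat.succ_lt_succ hi⟩
          ⟨ni ⟨(i : ℕ) + 1, Nat.succ_lt_succ hi⟩ - 1,
            Nat.sub_lt (hni ⟨(i : ℕ) + 1, Nat.succ_lt_succ hi⟩) Nat.one_pos⟩,
        b ≤ a := by
  intro i hipos hi a ha b hb
  set i' : Fin (s + 1) := ⟨(i : ℕ) + 1, Nat.succ_lt_succ hi⟩ with hi'def
  set j : Fin (ni i) := ⟨ni i - 1, Nat.sub_lt (hni i) Nat.one_pos⟩ with hjdef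
  set j' : Fin (ni i') := ⟨ni i' - 1, Nat.sub_lt (hni i') Nat.one_pos⟩ with hj'def
  set u := U i j with hudef
  set v := U i' j' with hvdef
  set cv := Multiset.card v with hcv
  set L := stdList (u + v) with hLdef
  have hLsorted : L.Pairwise (· ≤ ·) := stdList_sorted _
  have hLlen : L.length = Multiset.card u + cv := by
    rw [hLdef, stdList_length]; simp [hcv]
  obtain ⟨l, l', heq⟩ := hOrd i i' j j' (by simp [Fin.lt_def, hi'def])
  have h1 : ((L.drop cv : List ℕ) : Multiset ℕ) = U i l := congrArg Prod.fst heq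
  have h2 : ((L.take cv : List ℕ) : Multiset ℕ) = U i' l' := congrArg Prod.snd heq
  have hlj : l ≤ j := by
    rw [Fin.le_def]
    show (l : ℕ) ≤ ni i - 1
    have := l.isLt; omega
  rcases lt_or_eq_of_le hlj with hlt | rfl
  · -- impossible: the drop part would be revlex-bigger than the minimal u
    exfalso
    have hdropsorted : (L.drop cv).Pairwise (· ≤ ·) :=
      List.Pairwise.sublist (List.drop_sublist _ _) hLsorted
    have hstd : stdList (U i l) = L.drop cv := by
      rw [← h1]; exact stdList_of_sorted hdropsorted
    obtain ⟨k, hklt, -⟩ := hrev i l j hlt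
    rw [hstd, show U i j = u from rfl] at hklt
    by_cases hk : k < Multiset.card u
    · have hge : (stdList u).getD k 0 ≤ L.getD (cv + k) 0 := merge_ge u v hk
      have hkL : cv + k < L.length := by omega
      have hkD : k < (L.drop cv).length := by simp; omega
      have hdg : (L.drop cv).getD k 0 = L.getD (cv + k) 0 := by
        rw [List.getD_eq_getElem _ _ hkD, List.getD_eq_getElem _ _ hkL,
          List.getElem_drop]
      rw [hdg] at hklt
      omega
    · have : (stdList u).getD k 0 = 0 := by
        apply List.getD_eq_default
        rw [stdList_length]; omega
      omega
  · -- l = j : the drop part is u itself, so the take part is v, and we win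
    have hdropu : ((L.drop cv : List ℕ) : Multiset ℕ) = u := h1
    have htakev : ((L.take cv : List ℕ) : Multiset ℕ) = v := by
      have hsum : ((L.take cv : List ℕ) : Multiset ℕ) + ((L.drop cv : List ℕ) : Multiset ℕ)
          = u + v := by
        have h3 := congrArg (fun l : List ℕ => (l : Multiset ℕ)) (List.take_append_drop cv L)
        simp only [← Multiset.coe_add] at h3
        rw [h3, hLdef, stdList_coe]
      rw [hdropu] at hsum
      have : ((L.take cv : List ℕ) : Multiset ℕ) + u = u + v := hsum
      rw [add_comm u v] at this
      exact add_right_cancel this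
    have hbL : b ∈ L.take cv := by
      rw [← Multiset.mem_coe, htakev]; exact hb
    have haL : a ∈ L.drop cv := by
      rw [← Multiset.mem_coe, hdropu]; exact ha
    exact take_le_drop hLsorted cv hbL haL
end
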